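/- arXiv:2112.00932 — 6 statements merged into one kernel-verified Lean document; each statement's English description precedes it below -/
import Mathlib

section
/- Let X, Y, W be real square-integrable random variables such that W is independent of the pair (X, Y) and Var(Y) + Var(W) > 0. Then the map λ ↦ Var(X − λ(Y − W)) attains its unique minimum over ℝ at λ̃* = Cov(X, Y)/(Var(Y) + Var(W)). In particular, if p is a probability distribution, f and g are real square-integrable functions of a p-distributed variable with Var_p(g) > 0, (Z_k)_{k=1}^M is an i.i.d. p-distributed sample, (Z'_j)_{j=1}^{M_E} is an i.i.d. p-distributed sample independent of (Z_k), and X = (1/M)∑_k f(Z_k), Y = (1/M)∑_k g(Z_k), W = (1/M_E)∑_j g(Z'_j), then λ̃* = (M_E/(M + M_E))·Cov_p(f, g)/Var_p(g). -/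
open MeasureTheory ProbabilityTheory

/-- Covariance of two real random variables. -/
noncomputable def cov {Ω : Type*} [MeasurableSpace Ω] (P : Measure Ω) (X Y : Ω → ℝ) : ℝ :=
  ∫ ω, (X ω - ∫ ω', X ω' ∂P) * (Y ω - ∫ ω', Y ω' ∂P) ∂P

section helpers
set_option linter.unusedSectionVars false
variable {Ω : Type*} [MeasurableSpace Ω] {P : Measure Ω} [IsProbabilityMeasure P]
  {X Y X' W : Ω → ℝ}

lemma l2mul (hX : MemLp X 2 P) (hY : MemLp Y 2 P) :
    Integrable (fun ω => X ω * Y ω) P := by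
  have h := hY.smul (φ := X) hX (r := 1)
    (hpqr := ⟨by simp only [inv_one]; exact ENNReal.inv_two_add_inv_two⟩)
  rw [memLp_one_iff_integrable] at h
  exact h

lemma cov_eq (hX : MemLp X 2 P) (hY : MemLp Y 2 P) :
    cov P X Y = (∫ ω, X ω * Y ω ∂P) - (∫ ω, X ω ∂P) * (∫ ω, Y ω ∂P) := by
  set a := ∫ ω, X ω ∂P with ha
  set b := ∫ ω, Y ω ∂P with hb
  have i1 : Integrable (fun ω => X ω * Y ω) P := l2mul hX hY
  have i2 : Integrable (fun ω => a * Y ω) P := (hY.integrable one_le_two).const_mul a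
  have i3 : Integrable (fun ω => b * X ω) P := (hX.integrable one_le_two).const_mul b
  have : cov P X Y = ∫ ω, ((X ω * Y ω - a * Y ω) - (b * X ω - a * b)) ∂P := by
    rw [cov]; congr 1; funext ω; ring
  have j1 : Integrable (fun ω => X ω * Y ω - a * Y ω) P := i1.sub i2
  have j2 : Integrable (fun ω => b * X ω - a * b) P := i3.sub (integrable_const _)
  rw [this, integral_sub j1 j2,
    integral_sub i1 i2, integral_sub i3 (integrable_const _),
    integral_const_mul, integral_const_mul, integral_const]
  simp; ring

lemma var_eq_cov (hX : MemLp X 2 P) : variance X P = cov P X X := by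
  have h1 : P[X ^ 2] = ∫ ω, X ω * X ω ∂P := by
    apply integral_congr_ae; filter_upwards with ω; simp [pow_two]
  rw [variance_eq_sub hX, cov_eq hX hX, h1]; ring

lemma cov_comm : cov P X Y = cov P Y X := by
  unfold cov; simp_rw [mul_comm]

lemma cov_congr (h1 : X =ᵐ[P] X') (h2 : Y =ᵐ[P] W) : cov P X Y = cov P X' W := by
  unfold cov
  rw [integral_congr_ae h1, integral_congr_ae h2]
  apply integral_congr_ae
  filter_upwards [h1, h2] with ω e1 e2
  rw [e1, e2]

lemma cov_indep_zero (h : IndepFun X Y P) (hX : MemLp X 2 P) (hY : MemLp Y 2 P) :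
    cov P X Y = 0 := by
  rw [cov_eq hX hY]
  exact sub_eq_zero.mpr (h.integral_mul_eq_mul_integral hX.aestronglyMeasurable hY.aestronglyMeasurable)

lemma cov_smul_left (c : ℝ) : cov P (fun ω => c * X ω) Y = c * cov P X Y := by
  unfold cov
  rw [integral_const_mul]
  rw [show (fun ω => (c * X ω - c * ∫ ω', X ω' ∂P) * (Y ω - ∫ ω', Y ω' ∂P))
    = fun ω => c * ((X ω - ∫ ω', X ω' ∂P) * (Y ω - ∫ ω', Y ω' ∂P)) from by funext ω; ring,
    integral_const_mul]

lemma cov_smul_right (c : ℝ) : cov P X (fun ω => c * Y ω) = c * cov P X Y := by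
  rw [cov_comm, cov_smul_left, cov_comm]

lemma cov_add_left (hX : MemLp X 2 P) (hX' : MemLp X' 2 P) (hY : MemLp Y 2 P) :
    cov P (fun ω => X ω + X' ω) Y = cov P X Y + cov P X' Y := by
  have hXX' : MemLp (fun ω => X ω + X' ω) 2 P := hX.add hX'
  rw [cov_eq hXX' hY, cov_eq hX hY, cov_eq hX' hY]
  have e1 : ∫ ω, (X ω + X' ω) ∂P = (∫ ω, X ω ∂P) + ∫ ω, X' ω ∂P :=
    integral_add (hX.integrable one_le_two) (hX'.integrable one_le_two)
  have e2 : ∫ ω, (X ω + X' ω) * Y ω ∂P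
      = (∫ ω, X ω * Y ω ∂P) + ∫ ω, X' ω * Y ω ∂P := by
    rw [show (fun ω => (X ω + X' ω) * Y ω) = fun ω => X ω * Y ω + X' ω * Y ω from by
        funext ω; ring]
    exact integral_add (l2mul hX hY) (l2mul hX' hY)
  rw [e1, e2]; ring

lemma cov_sub_left (hX : MemLp X 2 P) (hX' : MemLp X' 2 P) (hY : MemLp Y 2 P) :
    cov P (fun ω => X ω - X' ω) Y = cov P X Y - cov P X' Y := by
  have hXX' : MemLp (fun ω => X ω - X' ω) 2 P := hX.sub hX'
  rw [cov_eq hXX' hY, cov_eq hX hY, cov_eq hX' hY]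
  have e1 : ∫ ω, (X ω - X' ω) ∂P = (∫ ω, X ω ∂P) - ∫ ω, X' ω ∂P :=
    integral_sub (hX.integrable one_le_two) (hX'.integrable one_le_two)
  have e2 : ∫ ω, (X ω - X' ω) * Y ω ∂P
      = (∫ ω, X ω * Y ω ∂P) - ∫ ω, X' ω * Y ω ∂P := by
    rw [show (fun ω => (X ω - X' ω) * Y ω) = fun ω => X ω * Y ω - X' ω * Y ω from by
        funext ω; ring]
    exact integral_sub (l2mul hX hY) (l2mul hX' hY)
  rw [e1, e2]; ring

lemma cov_sub_right (hX : MemLp X 2 P) (hY : MemLp Y 2 P) (hW : MemLp W 2 P) :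
    cov P X (fun ω => Y ω - W ω) = cov P X Y - cov P X W := by
  rw [cov_comm, cov_sub_left hY hW hX, cov_comm (X := Y), cov_comm (X := W)]

lemma V_expand (hX : MemLp X 2 P) (hU : MemLp Y 2 P) (l : ℝ) :
    variance (fun ω => X ω - l * Y ω) P
      = variance X P - 2 * l * cov P X Y + l ^ 2 * variance Y P := by
  have hlU : MemLp (fun ω => l * Y ω) 2 P := hU.const_mul l
  have hD : MemLp (fun ω => X ω - l * Y ω) 2 P := hX.sub hlU
  rw [var_eq_cov hD, cov_sub_left hX hlU hD,
    cov_sub_right hX hX hlU, cov_sub_right hlU hX hlU,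
    cov_smul_right, cov_smul_left, cov_smul_left, cov_smul_right,
    var_eq_cov hX, var_eq_cov hU, cov_comm (X := Y) (Y := X)]
  ring

end helpers

section more
variable {Ω : Type*} [MeasurableSpace Ω] {P : Measure Ω} [IsProbabilityMeasure P]
  {X Y : Ω → ℝ}
set_option linter.unusedSectionVars false

lemma cov_map {Z : Type*} [MeasurableSpace Z] {S : Ω → Z} {p : Measure Z} {f g : Z → ℝ}
    (hS : AEMeasurable S P) (hmap : Measure.map S P = p)
    (hf : AEStronglyMeasurable f p) (hg : AEStronglyMeasurable g p) :
    cov P (fun ω => f (S ω)) (fun ω => g (S ω)) = cov p f g := by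
  have h1 : ∫ ω, f (S ω) ∂P = ∫ z, f z ∂p := by
    rw [← hmap]; exact (integral_map hS (by rw [hmap]; exact hf)).symm
  have h2 : ∫ ω, g (S ω) ∂P = ∫ z, g z ∂p := by
    rw [← hmap]; exact (integral_map hS (by rw [hmap]; exact hg)).symm
  unfold cov
  rw [h1, h2]
  set a := ∫ z, f z ∂p with ha
  set b := ∫ z, g z ∂p with hb
  have hm : AEStronglyMeasurable (fun z => (f z - a) * (g z - b)) (Measure.map S P) := by
    rw [hmap]
    exact (hf.sub aestronglyMeasurable_const).mul (hg.sub aestronglyMeasurable_const)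
  rw [← hmap]
  exact (integral_map (f := fun z => (f z - a) * (g z - b)) hS hm).symm

lemma cov_sum_left {ι : Type*} (s : Finset ι) (A : ι → Ω → ℝ)
    (hA : ∀ i ∈ s, MemLp (A i) 2 P) (hY : MemLp Y 2 P) :
    cov P (fun ω => ∑ i ∈ s, A i ω) Y = ∑ i ∈ s, cov P (A i) Y := by
  induction s using Finset.cons_induction with
  | empty => simp [cov]
  | cons a s ha ih =>
    have h1 : MemLp (A a) 2 P := hA a (Finset.mem_cons_self a s)
    have h2 : ∀ i ∈ s, MemLp (A i) 2 P := fun i hi => hA i (Finset.mem_cons_of_mem hi)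
    have hsum : MemLp (fun ω => ∑ i ∈ s, A i ω) 2 P := by
      have h := memLp_finset_sum' s h2
      rwa [show (∑ i ∈ s, A i) = (fun ω => ∑ i ∈ s, A i ω) from by funext ω; simp] at h
    rw [show (fun ω => ∑ i ∈ Finset.cons a s ha, A i ω)
        = fun ω => A a ω + ∑ i ∈ s, A i ω from by funext ω; rw [Finset.sum_cons],
      cov_add_left h1 hsum hY, ih h2, Finset.sum_cons]

lemma cov_sum_right {ι : Type*} (t : Finset ι) (B : ι → Ω → ℝ)
    (hX : MemLp X 2 P) (hB : ∀ j ∈ t, MemLp (B j) 2 P) :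
    cov P X (fun ω => ∑ j ∈ t, B j ω) = ∑ j ∈ t, cov P X (B j) := by
  rw [cov_comm, cov_sum_left t B hB hX]
  exact Finset.sum_congr rfl fun j _ => cov_comm

end more

/-- first part: if `W` is independent of the pair `(X, Y)` and
`Var(Y) + Var(W) > 0`, then `λ̃* = Cov(X,Y)/(Var(Y)+Var(W))` is the unique minimizer of
`λ ↦ Var(X − λ(Y − W))`; (second part, "in particular") when `X, Y, W` are the Monte Carlo
averages `X = (1/M)∑ f(Z_k)`, `Y = (1/M)∑ g(Z_k)`, `W = (1/M_E)∑ g(Z'_j)` over i.i.d.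
`p`-distributed samples (the two batches independent), the optimal coefficient equals
`(M_E/(M+M_E))·Cov_p(f,g)/Var_p(g)`. -/
theorem stmt6 {Ω : Type*} [MeasurableSpace Ω] (P : Measure Ω) [IsProbabilityMeasure P]
    (X Y W : Ω → ℝ)
    (hX : MemLp X 2 P) (hY : MemLp Y 2 P) (hW : MemLp W 2 P)
    (hindep : IndepFun (fun ω => (X ω, Y ω)) W P)
    (hpos : 0 < variance Y P + variance W P)
    (lamStar : ℝ) (hlam : lamStar = cov P X Y / (variance Y P + variance W P))
    (V : ℝ → ℝ) (hV : ∀ l : ℝ, V l = variance (fun ω => X ω - l * (Y ω - W ω)) P) :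
    (∀ l : ℝ, l ≠ lamStar → V lamStar < V l) ∧
    (∀ (Z : Type) (_ : MeasurableSpace Z) (p : Measure Z), IsProbabilityMeasure p →
      ∀ (f g : Z → ℝ), MemLp f 2 p → MemLp g 2 p → 0 < variance g p →
      ∀ (M ME : ℕ), 0 < M → 0 < ME →
      ∀ S : Fin M ⊕ Fin ME → Ω → Z,
        iIndepFun (m := fun _ : Fin M ⊕ Fin ME => (inferInstance : MeasurableSpace Z)) S P →
        (∀ i, Measure.map (S i) P = p) →
        X = (fun ω => (M : ℝ)⁻¹ * ∑ k : Fin M, f (S (Sum.inl k) ω)) →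
        Y = (fun ω => (M : ℝ)⁻¹ * ∑ k : Fin M, g (S (Sum.inl k) ω)) →
        W = (fun ω => (ME : ℝ)⁻¹ * ∑ j : Fin ME, g (S (Sum.inr j) ω)) →
        lamStar = (ME / (M + ME) : ℝ) * (cov p f g / variance g p)) := by
  constructor
  · intro l hl
    have hU : MemLp (fun ω => Y ω - W ω) 2 P := hY.sub hW
    have hXW : IndepFun X W P := hindep.comp measurable_fst measurable_id
    have hYW : IndepFun Y W P := hindep.comp measurable_snd measurable_id
    have hcXU : cov P X (fun ω => Y ω - W ω) = cov P X Y := by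
      rw [cov_sub_right hX hY hW, cov_indep_zero hXW hX hW, sub_zero]
    have hvU : variance (fun ω => Y ω - W ω) P = variance Y P + variance W P := by
      rw [var_eq_cov hU, cov_sub_left hY hW hU, cov_sub_right hY hY hW,
        cov_sub_right hW hY hW, cov_indep_zero hYW hY hW, cov_comm (X := W) (Y := Y),
        cov_indep_zero hYW hY hW, var_eq_cov hY, var_eq_cov hW]
      ring
    rw [hV l, hV lamStar, V_expand hX hU l, V_expand hX hU lamStar, hcXU, hvU]
    set s := variance Y P + variance W P with hs'
    set c := cov P X Y with hc'
    have hs : s ≠ 0 := ne_of_gt hpos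
    have hc : c = lamStar * s := by rw [hlam]; field_simp
    have hd : (l - lamStar) ≠ 0 := sub_ne_zero.mpr hl
    rw [hc]
    nlinarith [mul_pos hpos (mul_self_pos.mpr hd)]
  · intro Z mZ p hp f g hf hg hvg M ME hM hME S hiid hmap hXe hYe hWe
    haveI := hp
    have hSm : ∀ i, AEMeasurable (S i) P := by
      intro i
      by_contra h
      have h0 := Measure.map_of_not_aemeasurable h
      rw [hmap i] at h0
      have h1 : p Set.univ = 1 := hp.measure_univ
      rw [h0] at h1
      simp at h1
    have memcomp : ∀ (φ : Z → ℝ), MemLp φ 2 p → ∀ i, MemLp (fun ω => φ (S i ω)) 2 P := by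
      intro φ hφ i
      exact (memLp_map_measure_iff (by rw [hmap i]; exact hφ.aestronglyMeasurable)
        (hSm i)).mp (by rw [hmap i]; exact hφ)
    have diag : ∀ (φ ψ : Z → ℝ), MemLp φ 2 p → MemLp ψ 2 p → ∀ i,
        cov P (fun ω => φ (S i ω)) (fun ω => ψ (S i ω)) = cov p φ ψ := fun φ ψ hφ hψ i =>
      cov_map (hSm i) (hmap i) hφ.aestronglyMeasurable hψ.aestronglyMeasurable
    have key : ∀ (φ ψ : Z → ℝ), MemLp φ 2 p → MemLp ψ 2 p → ∀ i j, i ≠ j →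
        cov P (fun ω => φ (S i ω)) (fun ω => ψ (S j ω)) = 0 := by
      intro φ ψ hφ hψ i j hij
      set φ' := hφ.aestronglyMeasurable.mk φ with hφ'def
      set ψ' := hψ.aestronglyMeasurable.mk ψ with hψ'def
      have hφ' := hφ.aestronglyMeasurable.stronglyMeasurable_mk
      have hψ' := hψ.aestronglyMeasurable.stronglyMeasurable_mk
      have hφe : φ =ᵐ[p] φ' := hφ.aestronglyMeasurable.ae_eq_mk
      have hψe : ψ =ᵐ[p] ψ' := hψ.aestronglyMeasurable.ae_eq_mk
      have e1 : (fun ω => φ (S i ω)) =ᵐ[P] (fun ω => φ' (S i ω)) :=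
        ae_eq_comp (hSm i) (by rw [hmap i]; exact hφe)
      have e2 : (fun ω => ψ (S j ω)) =ᵐ[P] (fun ω => ψ' (S j ω)) :=
        ae_eq_comp (hSm j) (by rw [hmap j]; exact hψe)
      have hind : IndepFun (fun ω => φ' (S i ω)) (fun ω => ψ' (S j ω)) P :=
        (hiid.indepFun hij).comp hφ'.measurable hψ'.measurable
      rw [cov_congr e1 e2]
      exact cov_indep_zero hind ((memcomp φ hφ i).ae_eq e1) ((memcomp ψ hψ j).ae_eq e2)
    have main : ∀ (φ ψ : Z → ℝ), MemLp φ 2 p → MemLp ψ 2 p →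
        ∀ (N : ℕ), 0 < N → ∀ (T : Fin N → Fin M ⊕ Fin ME), Function.Injective T →
        cov P (fun ω => (N : ℝ)⁻¹ * ∑ k : Fin N, φ (S (T k) ω))
          (fun ω => (N : ℝ)⁻¹ * ∑ k : Fin N, ψ (S (T k) ω)) = (N : ℝ)⁻¹ * cov p φ ψ := by
      intro φ ψ hφ hψ N hN T hT
      have hmemφ : ∀ k, MemLp (fun ω => φ (S (T k) ω)) 2 P := fun k => memcomp φ hφ (T k)
      have hmemψ : ∀ k, MemLp (fun ω => ψ (S (T k) ω)) 2 P := fun k => memcomp ψ hψ (T k)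
      have hsψ : MemLp (fun ω => ∑ k : Fin N, ψ (S (T k) ω)) 2 P := by
        have h := memLp_finset_sum' (μ := P) Finset.univ
          (f := fun k ω => ψ (S (T k) ω)) (fun k _ => hmemψ k)
        rwa [show (∑ k : Fin N, fun ω => ψ (S (T k) ω))
          = (fun ω => ∑ k : Fin N, ψ (S (T k) ω)) from by funext ω; simp] at h
      have hrow : ∀ k, cov P (fun ω => φ (S (T k) ω)) (fun ω => ∑ k' : Fin N, ψ (S (T k') ω))
          = cov p φ ψ := by
        intro k
        rw [cov_sum_right Finset.univ (fun k' ω => ψ (S (T k') ω)) (hmemφ k)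
          (fun k' _ => hmemψ k')]
        have hterm : ∀ k' : Fin N, cov P (fun ω => φ (S (T k) ω)) (fun ω => ψ (S (T k') ω))
            = if k' = k then cov p φ ψ else 0 := by
          intro k'
          by_cases h : k' = k
          · subst h; rw [if_pos rfl]; exact diag φ ψ hφ hψ (T k')
          · rw [if_neg h]
            exact key φ ψ hφ hψ (T k) (T k') (fun hc => h (hT hc).symm)
        rw [Finset.sum_congr rfl fun k' _ => hterm k', Finset.sum_ite_eq']
        simp
      rw [cov_smul_left, cov_smul_right,
        cov_sum_left Finset.univ (fun k ω => φ (S (T k) ω)) (fun k _ => hmemφ k) hsψ,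
        Finset.sum_congr rfl fun k _ => hrow k, Finset.sum_const, Finset.card_univ,
        Fintype.card_fin, nsmul_eq_mul]
      have hNne : (N : ℝ) ≠ 0 := Nat.cast_ne_zero.mpr hN.ne'
      field_simp
    have hc : cov P X Y = (M : ℝ)⁻¹ * cov p f g := by
      rw [hXe, hYe]; exact main f g hf hg M hM Sum.inl Sum.inl_injective
    have hvY : variance Y P = (M : ℝ)⁻¹ * variance g p := by
      have hY' : MemLp (fun ω => (M : ℝ)⁻¹ * ∑ k : Fin M, g (S (Sum.inl k) ω)) 2 P :=
        hYe ▸ hY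
      rw [hYe, var_eq_cov hY', main g g hg hg M hM Sum.inl Sum.inl_injective, var_eq_cov hg]
    have hvW : variance W P = (ME : ℝ)⁻¹ * variance g p := by
      have hW' : MemLp (fun ω => (ME : ℝ)⁻¹ * ∑ j : Fin ME, g (S (Sum.inr j) ω)) 2 P :=
        hWe ▸ hW
      rw [hWe, var_eq_cov hW', main g g hg hg ME hME Sum.inr Sum.inr_injective, var_eq_cov hg]
    rw [hlam, hc, hvY, hvW]
    have hMne : (M : ℝ) ≠ 0 := Nat.cast_ne_zero.mpr hM.ne'
    have hMEne : (ME : ℝ) ≠ 0 := Nat.cast_ne_zero.mpr hME.ne'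
    have hvne : variance g p ≠ 0 := ne_of_gt hvg
    have hMME : (M : ℝ) + ME ≠ 0 := by positivity
    field_simp
    ring
end

section
/- In the setting of the hierarchical multilevel control-variate estimator E^Λ_L = λ_1 E_{M_0}[f_1] + ∑_{h=1}^{L} (λ_{h+1} E_{M_h}[f_{h+1}] − λ_h E_{M_h}[f_h]) with λ_{L+1} = 1, built from mutually independent i.i.d. p-distributed batches of sizes M_0, …, M_L, assume Var_p(f_h) > 0 for h = 1, …, L. Then the map Λ ↦ Var(E^Λ_L) is a strictly convex quadratic on ℝ^L, it has a unique minimizer Λ* = (λ*_1,…,λ*_L), and Λ* is characterized as the unique solution of the tridiagonal linear system: for h = 1, …, L, λ_h Var_p(f_h) − λ_{h−1} (M_h/(M_{h−1}+M_h)) Cov_p(f_h, f_{h−1}) − λ_{h+1} (M_{h−1}/(M_{h−1}+M_h)) Cov_p(f_{h+1}, f_h) = 0, with the conventions λ_0 = 0 and λ_{L+1} = 1. -/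
open MeasureTheory ProbabilityTheory

/-- Covariance under `p` of two square-integrable functions of a `p`-distributed variable. -/
noncomputable def covP {Z : Type*} [MeasurableSpace Z] (p : Measure Z) (f g : Z → ℝ) : ℝ :=
  ∫ z, (f z - ∫ z', f z' ∂p) * (g z - ∫ z', g z' ∂p) ∂p

/-- Extension of a coefficient vector `Λ = (λ_1, …, λ_L)` to `ℕ`, with the conventions
`λ_0 = 0` and `λ_{L+1} = 1`. -/
def lamExt (L : ℕ) (Λ : Fin L → ℝ) : ℕ → ℝ := fun h =>
  if h0 : h = 0 then 0
  else if hL : h ≤ L then Λ ⟨h - 1, by omega⟩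
  else if h = L + 1 then 1 else 0

/-- The tridiagonal optimality system for the hierarchical control-variate coefficients:
for `h = 1, …, L`,
`λ_h Var_p(f_h) − λ_{h−1} (M_h/(M_{h−1}+M_h)) Cov_p(f_h, f_{h−1})
  − λ_{h+1} (M_{h−1}/(M_{h−1}+M_h)) Cov_p(f_{h+1}, f_h) = 0`,
with `λ_0 = 0` and `λ_{L+1} = 1`. -/
def TridiagSystem {Z : Type*} [MeasurableSpace Z] (p : Measure Z)
    (L : ℕ) (f : ℕ → Z → ℝ) (M : ℕ → ℕ) (Λ : Fin L → ℝ) : Prop :=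
  ∀ h, 1 ≤ h → h ≤ L →
    lamExt L Λ h * variance (f h) p
      - lamExt L Λ (h - 1) * ((M h : ℝ) / ((M (h - 1) : ℝ) + (M h : ℝ))) * covP p (f h) (f (h - 1))
      - lamExt L Λ (h + 1) * ((M (h - 1) : ℝ) / ((M (h - 1) : ℝ) + (M h : ℝ)))
          * covP p (f (h + 1)) (f h) = 0

/-! ### Auxiliary analytic lemmas -/

section AnalyticAux
variable {Ω : Type*} [MeasurableSpace Ω] {μ : Measure Ω}

theorem MeasureTheory.MemLp.variance_eq {X : Ω → ℝ} (hX : MemLp X 2 μ) :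
    variance X μ = μ[((X - fun _ => μ[X]) ^ 2 : Ω → ℝ)] := by
  rw [variance_eq_integral hX.aestronglyMeasurable.aemeasurable]; rfl

lemma variance_congr' {X Y : Ω → ℝ} (h : X =ᵐ[μ] Y) : variance X μ = variance Y μ := by
  have hm : μ[X] = μ[Y] := integral_congr_ae h
  unfold variance evariance
  rw [hm]
  congr 1
  apply lintegral_congr_ae
  filter_upwards [h] with ω hω
  rw [hω]

lemma covP_congr {Z : Type*} [MeasurableSpace Z] {p : Measure Z} {f f' g g' : Z → ℝ}
    (hf : f =ᵐ[p] f') (hg : g =ᵐ[p] g') : covP p f g = covP p f' g' := by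
  have h1 : ∫ z', f z' ∂p = ∫ z', f' z' ∂p := integral_congr_ae hf
  have h2 : ∫ z', g z' ∂p = ∫ z', g' z' ∂p := integral_congr_ae hg
  unfold covP
  rw [h1, h2]
  apply integral_congr_ae
  filter_upwards [hf, hg] with z e1 e2
  rw [e1, e2]

lemma var_comb {Z : Type*} [MeasurableSpace Z] {p : Measure Z} [IsProbabilityMeasure p]
    {f g : Z → ℝ} (hf : MemLp f 2 p) (hg : MemLp g 2 p) (a b : ℝ) :
    variance (fun z => a * f z + b * g z) p
      = a^2 * variance f p + b^2 * variance g p + 2*a*b*covP p f g := by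
  have hfi : Integrable f p := hf.integrable one_le_two
  have hgi : Integrable g p := hg.integrable one_le_two
  set mf := ∫ z', f z' ∂p with hmf
  set mg := ∫ z', g z' ∂p with hmg
  have hF : MemLp (fun z => f z - mf) 2 p := hf.sub (memLp_const mf)
  have hG : MemLp (fun z => g z - mg) 2 p := hg.sub (memLp_const mg)
  have hF2 : Integrable (fun z => (f z - mf)^2) p := hF.integrable_sq
  have hG2 : Integrable (fun z => (g z - mg)^2) p := hG.integrable_sq
  have hFG : Integrable (fun z => (f z - mf) * (g z - mg)) p := by
    have h12 : (1:ENNReal)/1 = 1/2 + 1/2 := by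
      rw [ENNReal.div_add_div_same, one_add_one_eq_two,
        ENNReal.div_self two_ne_zero ENNReal.ofNat_ne_top, div_one]
    rw [← memLp_one_iff_integrable]
    exact hG.smul (φ := fun z => f z - mf) (r := 1) hF
  have hsum : MemLp (fun z => a * f z + b * g z) 2 p := (hf.const_mul a).add (hg.const_mul b)
  have hmean : ∫ z, (a * f z + b * g z) ∂p = a * mf + b * mg := by
    rw [integral_add (hfi.const_mul a) (hgi.const_mul b), integral_const_mul, integral_const_mul]
  rw [hsum.variance_eq]
  simp only [Pi.pow_apply, Pi.sub_apply]
  rw [hmean]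
  have hpt : ∀ z, (a * f z + b * g z - (a * mf + b * mg))^2
      = a^2 * (f z - mf)^2 + b^2 * (g z - mg)^2 + (2*a*b) * ((f z - mf) * (g z - mg)) := by
    intro z; ring
  calc ∫ z, (a * f z + b * g z - (a * mf + b * mg))^2 ∂p
      = ∫ z, (a^2 * (f z - mf)^2 + b^2 * (g z - mg)^2
          + (2*a*b) * ((f z - mf) * (g z - mg))) ∂p := by
        exact integral_congr_ae (ae_of_all _ hpt)
    _ = a^2 * ∫ z, (f z - mf)^2 ∂p + b^2 * ∫ z, (g z - mg)^2 ∂p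
          + (2*a*b) * ∫ z, (f z - mf) * (g z - mg) ∂p := by
        have hI1 : Integrable (fun z => a^2 * (f z - mf)^2 + b^2 * (g z - mg)^2) p :=
          (hF2.const_mul _).add (hG2.const_mul _)
        have hI2 : Integrable (fun z => (2*a*b) * ((f z - mf) * (g z - mg))) p :=
          hFG.const_mul _
        rw [integral_add hI1 hI2, integral_add (hF2.const_mul _) (hG2.const_mul _),
          integral_const_mul, integral_const_mul, integral_const_mul]
    _ = a^2 * variance f p + b^2 * variance g p + 2*a*b*covP p f g := by
        unfold covP
        rw [hf.variance_eq, hg.variance_eq]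
        simp only [Pi.pow_apply, Pi.sub_apply]
        try rw [← hmf]
        try rw [← hmg]

lemma aemeasurable_of_map_eq {Ω' Z : Type*} [MeasurableSpace Ω'] [MeasurableSpace Z]
    {P : Measure Ω'} {p : Measure Z} [IsProbabilityMeasure p]
    {S : Ω' → Z} (hmap : Measure.map S P = p) : AEMeasurable S P := by
  by_contra h
  have : p Set.univ = 0 := by
    rw [← hmap, Measure.map_of_not_aemeasurable h]; rfl
  simp [measure_univ] at this

lemma memℒp_comp_map {Ω' Z : Type*} [MeasurableSpace Ω'] [MeasurableSpace Z]
    {P : Measure Ω'} {p : Measure Z} [IsProbabilityMeasure p]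
    {S : Ω' → Z} (hmap : Measure.map S P = p) {g : Z → ℝ} (hg : MemLp g 2 p) :
    MemLp (fun ω => g (S ω)) 2 P := by
  have hS : AEMeasurable S P := aemeasurable_of_map_eq hmap
  have hgm : AEStronglyMeasurable g (Measure.map S P) := by
    rw [hmap]; exact hg.aestronglyMeasurable
  have h1 := (memLp_map_measure_iff hgm hS (p := 2))
  rw [hmap] at h1
  exact h1.mp hg

lemma variance_comp_map {Ω' Z : Type*} [MeasurableSpace Ω'] [MeasurableSpace Z]
    {P : Measure Ω'} [IsProbabilityMeasure P] {p : Measure Z} [IsProbabilityMeasure p]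
    {S : Ω' → Z} (hmap : Measure.map S P = p) {g : Z → ℝ} (hg : MemLp g 2 p) :
    variance (fun ω => g (S ω)) P = variance g p := by
  have hS : AEMeasurable S P := aemeasurable_of_map_eq hmap
  have hgm : AEStronglyMeasurable g (Measure.map S P) := by
    rw [hmap]; exact hg.aestronglyMeasurable
  have hgS : MemLp (fun ω => g (S ω)) 2 P := memℒp_comp_map hmap hg
  rw [hgS.variance_eq, hg.variance_eq]
  simp only [Pi.pow_apply, Pi.sub_apply]
  have hmean : ∫ ω, g (S ω) ∂P = ∫ z, g z ∂p := by
    rw [← hmap, integral_map hS hgm]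
  rw [hmean]
  set cm := ∫ z, g z ∂p with hcm
  have hasm2 : AEStronglyMeasurable (fun z => (g z - cm)^2) (Measure.map S P) := by
    have h1 : AEStronglyMeasurable (fun z => g z - cm) (Measure.map S P) :=
      hgm.sub aestronglyMeasurable_const
    have h2 : (fun z => (g z - cm)^2) = fun z => (g z - cm) * (g z - cm) := by
      funext z; ring
    rw [h2]; exact h1.mul h1
  rw [← hmap]
  exact (integral_map hS hasm2).symm

end AnalyticAux

/-! ### The quadratic form and coefficient extensions -/

def lam0 (L : ℕ) (Λ : Fin L → ℝ) : ℕ → ℝ := fun h =>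
  if h0 : h = 0 then 0
  else if hL : h ≤ L then Λ ⟨h - 1, by omega⟩ else 0

def ind (i : ℕ) : ℕ → ℝ := fun n => if n = i then 1 else 0

noncomputable def qform (L : ℕ) (m v c : ℕ → ℝ) (μ ν : ℕ → ℝ) : ℝ :=
  m 0 * (μ 1 * ν 1) * v 1 + ∑ h ∈ Finset.Icc 1 L,
    m h * ((μ (h+1) * ν (h+1)) * v (h+1) + (μ h * ν h) * v h
      - (μ (h+1) * ν h + μ h * ν (h+1)) * c h)

section qf
variable {L : ℕ} {m v c : ℕ → ℝ}

lemma qform_symm (μ ν : ℕ → ℝ) : qform L m v c μ ν = qform L m v c ν μ := by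
  unfold qform
  congr 1
  · ring
  · exact Finset.sum_congr rfl fun h _ => by ring

lemma qform_bilin (a b : ℝ) (μ μ' ν : ℕ → ℝ) :
    qform L m v c (fun n => a * μ n + b * μ' n) ν
      = a * qform L m v c μ ν + b * qform L m v c μ' ν := by
  unfold qform
  have hs : ∑ h ∈ Finset.Icc 1 L,
      m h * (((a * μ (h+1) + b * μ' (h+1)) * ν (h+1)) * v (h+1)
        + ((a * μ h + b * μ' h) * ν h) * v h
        - ((a * μ (h+1) + b * μ' (h+1)) * ν h + (a * μ h + b * μ' h) * ν (h+1)) * c h)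
      = ∑ h ∈ Finset.Icc 1 L,
        (a * (m h * ((μ (h+1) * ν (h+1)) * v (h+1) + (μ h * ν h) * v h
            - (μ (h+1) * ν h + μ h * ν (h+1)) * c h))
          + b * (m h * ((μ' (h+1) * ν (h+1)) * v (h+1) + (μ' h * ν h) * v h
            - (μ' (h+1) * ν h + μ' h * ν (h+1)) * c h))) :=
    Finset.sum_congr rfl fun h _ => by ring
  rw [hs, Finset.sum_add_distrib, ← Finset.mul_sum, ← Finset.mul_sum]
  ring

lemma qform_add_left (μ μ' ν : ℕ → ℝ) :
    qform L m v c (fun n => μ n + μ' n) ν = qform L m v c μ ν + qform L m v c μ' ν := by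
  have := qform_bilin (L := L) (m := m) (v := v) (c := c) 1 1 μ μ' ν
  simpa using this

lemma qform_smul_left (a : ℝ) (μ ν : ℕ → ℝ) :
    qform L m v c (fun n => a * μ n) ν = a * qform L m v c μ ν := by
  have := qform_bilin (L := L) (m := m) (v := v) (c := c) a 0 μ μ ν
  simpa using this

lemma qform_add_right (μ ν ν' : ℕ → ℝ) :
    qform L m v c μ (fun n => ν n + ν' n) = qform L m v c μ ν + qform L m v c μ ν' := by
  rw [qform_symm, qform_add_left, qform_symm ν μ, qform_symm ν' μ]

lemma qform_smul_right (a : ℝ) (μ ν : ℕ → ℝ) :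
    qform L m v c μ (fun n => a * ν n) = a * qform L m v c μ ν := by
  rw [qform_symm, qform_smul_left, qform_symm ν μ]

lemma qform_bilin_right (a b : ℝ) (μ ν ν' : ℕ → ℝ) :
    qform L m v c μ (fun n => a * ν n + b * ν' n)
      = a * qform L m v c μ ν + b * qform L m v c μ ν' := by
  rw [qform_symm, qform_bilin, qform_symm ν μ, qform_symm ν' μ]

lemma qform_zero_right (μ : ℕ → ℝ) : qform L m v c μ (fun _ => 0) = 0 := by
  unfold qform; simp

lemma qform_sum_right {ι : Type*} (s : Finset ι) (w : ι → ℕ → ℝ) (μ : ℕ → ℝ) :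
    qform L m v c μ (fun n => ∑ j ∈ s, w j n) = ∑ j ∈ s, qform L m v c μ (w j) := by
  classical
  induction s using Finset.induction_on with
  | empty => simpa using qform_zero_right (L := L) (m := m) (v := v) (c := c) μ
  | insert a s' ha ih =>
    have h1 : (fun n => ∑ j ∈ insert a s', w j n)
        = fun n => w a n + ∑ j ∈ s', w j n := by
      funext n; rw [Finset.sum_insert ha]
    rw [h1, qform_add_right, ih, Finset.sum_insert ha]

lemma qform_expand (μ ν : ℕ → ℝ) :
    qform L m v c (fun n => μ n + ν n) (fun n => μ n + ν n)
      = qform L m v c μ μ + 2 * qform L m v c μ ν + qform L m v c ν ν := by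
  rw [qform_add_left, qform_add_right, qform_add_right, qform_symm ν μ]
  ring

lemma qform_congr {v' c' : ℕ → ℝ} (μ ν : ℕ → ℝ)
    (hv : ∀ h, 1 ≤ h → h ≤ L + 1 → v h = v' h) (hc : ∀ h, 1 ≤ h → h ≤ L → c h = c' h) :
    qform L m v c μ ν = qform L m v' c' μ ν := by
  unfold qform
  rw [hv 1 le_rfl (by omega)]
  congr 1
  apply Finset.sum_congr rfl
  intro h hh
  simp only [Finset.mem_Icc] at hh
  rw [hv h hh.1 (by omega), hv (h+1) (by omega) (by omega), hc h hh.1 hh.2]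

end qf

section lams
variable {L : ℕ}

lemma lamExt_zero (Λ : Fin L → ℝ) : lamExt L Λ 0 = 0 := by simp [lamExt]

lemma lam0_zero (Λ : Fin L → ℝ) : lam0 L Λ 0 = 0 := by simp [lam0]

lemma lamExt_mid (Λ : Fin L → ℝ) (n : ℕ) (h1 : 1 ≤ n) (h2 : n ≤ L) :
    lamExt L Λ n = Λ ⟨n - 1, by omega⟩ := by
  unfold lamExt; rw [dif_neg (by omega), dif_pos h2]

lemma lam0_mid (Λ : Fin L → ℝ) (n : ℕ) (h1 : 1 ≤ n) (h2 : n ≤ L) :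
    lam0 L Λ n = Λ ⟨n - 1, by omega⟩ := by
  unfold lam0; rw [dif_neg (by omega), dif_pos h2]

lemma lamExt_eq_lam0_add (Λ : Fin L → ℝ) :
    lamExt L Λ = fun n => lam0 L Λ n + ind (L+1) n := by
  funext n; unfold lamExt lam0 ind
  split_ifs <;> first | omega | simp

lemma lamExt_affine (a b : ℝ) (hab : a + b = 1) (x y : Fin L → ℝ) :
    lamExt L (a • x + b • y) = fun n => a * lamExt L x n + b * lamExt L y n := by
  funext n; unfold lamExt
  split_ifs
  · simp
  · simp [Pi.add_apply, Pi.smul_apply, smul_eq_mul]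
  · simp; linarith
  · simp

lemma lamExt_sub (x y : Fin L → ℝ) :
    (fun n => lamExt L x n - lamExt L y n) = lam0 L (x - y) := by
  funext n; unfold lamExt lam0
  split_ifs <;> simp [Pi.sub_apply]

lemma lamExt_add_smul (x : Fin L → ℝ) (t : ℝ) (e : Fin L → ℝ) :
    lamExt L (x + t • e) = fun n => lamExt L x n + t * lam0 L e n := by
  funext n; unfold lamExt lam0
  split_ifs <;> simp [Pi.add_apply, Pi.smul_apply, smul_eq_mul]

lemma lam0_add (x y : Fin L → ℝ) :
    lam0 L (x + y) = fun n => lam0 L x n + lam0 L y n := by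
  funext n; unfold lam0
  split_ifs <;> simp [Pi.add_apply]

lemma lam0_smul (a : ℝ) (x : Fin L → ℝ) :
    lam0 L (a • x) = fun n => a * lam0 L x n := by
  funext n; unfold lam0
  split_ifs <;> simp [Pi.smul_apply, smul_eq_mul]

lemma lam0_single (j : Fin L) : lam0 L (Pi.single j 1) = ind (↑j + 1) := by
  funext n; unfold lam0 ind
  by_cases h0 : n = 0
  · rw [dif_pos h0, if_neg (by omega)]
  · by_cases hL : n ≤ L
    · rw [dif_neg h0, dif_pos hL, Pi.single_apply]
      have hiff : (⟨n - 1, by omega⟩ : Fin L) = j ↔ n = ↑j + 1 := by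
        rw [Fin.ext_iff]; simp; omega
      by_cases hn : n = ↑j + 1
      · rw [if_pos (hiff.mpr hn), if_pos hn]
      · rw [if_neg (fun hh => hn (hiff.mp hh)), if_neg hn]
    · rw [dif_neg h0, dif_neg hL, if_neg (by have := j.isLt; omega)]

lemma lam0_eq_sum (Λ : Fin L → ℝ) :
    lam0 L Λ = fun n => ∑ j : Fin L, Λ j * ind (↑j + 1) n := by
  funext n; unfold lam0 ind
  split_ifs with h0 hL
  · symm; apply Finset.sum_eq_zero; intro j _
    rw [if_neg (by omega), mul_zero]
  · symm
    rw [Finset.sum_eq_single (⟨n - 1, by omega⟩ : Fin L)]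
    · rw [if_pos (by simp; omega), mul_one]
    · intro j _ hj
      rw [if_neg, mul_zero]
      intro hn
      exact hj (by rw [Fin.ext_iff]; simp; omega)
    · intro h; exact absurd (Finset.mem_univ _) h
  · symm; apply Finset.sum_eq_zero; intro j _
    rw [if_neg (by have := j.isLt; omega), mul_zero]

end lams

lemma qform_ind {L : ℕ} {m v c : ℕ → ℝ} (μ : ℕ → ℝ) (hμ0 : μ 0 = 0)
    (i : ℕ) (h1 : 1 ≤ i) (h2 : i ≤ L) :
    qform L m v c μ (ind i)
      = m (i-1) * (μ i * v i - μ (i-1) * c (i-1)) + m i * (μ i * v i - μ (i+1) * c i) := by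
  classical
  unfold qform ind
  have hterm : ∀ h ∈ Finset.Icc 1 L,
      m h * ((μ (h+1) * if h+1 = i then (1:ℝ) else 0) * v (h+1)
        + (μ h * if h = i then (1:ℝ) else 0) * v h
        - (μ (h+1) * (if h = i then (1:ℝ) else 0)
            + μ h * (if h+1 = i then (1:ℝ) else 0)) * c h)
      = (if h = i then m h * (μ h * v h - μ (h+1) * c h) else 0)
        + (if h = i - 1 then m h * (μ (h+1) * v (h+1) - μ h * c h) else 0) := by
    intro h hh
    simp only [Finset.mem_Icc] at hh
    by_cases hhi : h = i
    · rw [if_pos hhi, if_neg (by omega), if_pos hhi, if_neg (by omega)]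
      ring
    · rw [if_neg hhi, if_neg hhi]
      by_cases hh1 : h + 1 = i
      · rw [if_pos hh1, if_pos (by omega)]
        ring
      · rw [if_neg hh1, if_neg (by omega)]
        ring
  rw [Finset.sum_congr rfl hterm, Finset.sum_add_distrib,
    Finset.sum_ite_eq' (Finset.Icc 1 L) i, Finset.sum_ite_eq' (Finset.Icc 1 L) (i-1)]
  simp only [Finset.mem_Icc]
  have hii : i - 1 + 1 = i := by omega
  split_ifs with hc1 hc2 hc3
  all_goals try omega
  all_goals try (rw [hii]; ring)
  all_goals (subst hc1; simp only [Nat.sub_self, hμ0]; ring)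

/-! ### Variance of the hierarchical estimator -/

lemma estimator_variance {Ω Z : Type*} [MeasurableSpace Ω] [MeasurableSpace Z]
    (P : Measure Ω) [IsProbabilityMeasure P] (p : Measure Z) [IsProbabilityMeasure p]
    (L : ℕ) (G : ℕ → Z → ℝ) (hGm : ∀ h, Measurable (G h))
    (hGL2 : ∀ h, h ≤ L + 1 → MemLp (G h) 2 p)
    (M : ℕ → ℕ) (hM : ∀ h, h ≤ L → 0 < M h)
    (S : ℕ → ℕ → Ω → Z)
    (hindep : iIndepFun
      (fun q : Σ h : Fin (L + 1), Fin (M h) => S q.1 q.2) P)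
    (hlaw : ∀ h, h ≤ L → ∀ k, k < M h → Measure.map (S h k) P = p)
    (lam : ℕ → ℝ) (hlam0 : lam 0 = 0) :
    variance (fun ω => ∑ h ∈ Finset.range (L+1), ((M h : ℝ)⁻¹
        * ∑ k ∈ Finset.range (M h), (lam (h+1) * G (h+1) (S h k ω) - lam h * G h (S h k ω)))) P
      = qform L (fun h => ((M h : ℝ))⁻¹) (fun h => variance (G h) p)
          (fun h => covP p (G (h+1)) (G h)) lam lam := by
  classical
  have hMne : ∀ h, h ≤ L → ((M h : ℝ)) ≠ 0 := by
    intro h hh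
    have := hM h hh
    positivity
  set m : ℕ → ℝ := fun h => ((M h : ℝ))⁻¹ with hm
  set φ : (Σ h : Fin (L + 1), Fin (M h)) → Z → ℝ :=
    fun q z => m q.1 * (lam (q.1+1) * G (q.1+1) z - lam q.1 * G q.1 z) with hφdef
  have hq1 : ∀ q : Σ h : Fin (L + 1), Fin (M h), (q.1 : ℕ) ≤ L := fun q => by
    have := q.1.isLt; omega
  have hφm : ∀ q, Measurable (φ q) := fun q =>
    (((hGm _).const_mul _).sub ((hGm _).const_mul _)).const_mul _
  have hφ2 : ∀ q, MemLp (φ q) 2 p := by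
    intro q
    have h1 : MemLp (fun z => lam (q.1+1) * G (q.1+1) z) 2 p :=
      (hGL2 (q.1+1) (by have := hq1 q; omega)).const_mul _
    have h2 : MemLp (fun z => lam (q.1 : ℕ) * G q.1 z) 2 p :=
      (hGL2 q.1 (by have := hq1 q; omega)).const_mul _
    exact (h1.sub h2).const_mul _
  have hY2 : ∀ q, MemLp (fun ω => φ q (S q.1 q.2 ω)) 2 P := fun q =>
    memℒp_comp_map (hlaw q.1 (hq1 q) q.2 q.2.isLt) (hφ2 q)
  have hfun : (fun ω => ∑ h ∈ Finset.range (L+1), ((M h : ℝ)⁻¹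
        * ∑ k ∈ Finset.range (M h), (lam (h+1) * G (h+1) (S h k ω) - lam h * G h (S h k ω))))
      = ∑ q : Σ h : Fin (L + 1), Fin (M h), (fun ω => φ q (S q.1 q.2 ω)) := by
    funext ω
    rw [Finset.sum_apply]
    rw [← Finset.univ_sigma_univ, Finset.sum_sigma]
    rw [← Fin.sum_univ_eq_sum_range (fun h => ((M h : ℝ)⁻¹
        * ∑ k ∈ Finset.range (M h), (lam (h+1) * G (h+1) (S h k ω) - lam h * G h (S h k ω)))) (L+1)]
    apply Finset.sum_congr rfl
    intro h _
    rw [Finset.mul_sum]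
    rw [← Fin.sum_univ_eq_sum_range (fun k => ((M (h : ℕ) : ℝ))⁻¹
        * (lam ((h : ℕ)+1) * G ((h : ℕ)+1) (S (h : ℕ) k ω)
          - lam (h : ℕ) * G (h : ℕ) (S (h : ℕ) k ω))) (M (h : ℕ))]
  have hvar : variance (fun ω => ∑ h ∈ Finset.range (L+1), ((M h : ℝ)⁻¹
        * ∑ k ∈ Finset.range (M h), (lam (h+1) * G (h+1) (S h k ω) - lam h * G h (S h k ω)))) P
      = ∑ q : Σ h : Fin (L + 1), Fin (M h), variance (fun ω => φ q (S q.1 q.2 ω)) P := by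
    rw [hfun]
    exact IndepFun.variance_sum (fun q _ => hY2 q)
      (fun q _ q' _ hne => (hindep.indepFun hne).comp (hφm q) (hφm q'))
  rw [hvar]
  set W : ℕ → ℝ := fun h => variance (fun z => m h * (lam (h+1) * G (h+1) z - lam h * G h z)) p
    with hW
  have hWq : ∀ q : Σ h : Fin (L + 1), Fin (M h),
      variance (fun ω => φ q (S q.1 q.2 ω)) P = W q.1 := fun q =>
    variance_comp_map (hlaw q.1 (hq1 q) q.2 q.2.isLt) (hφ2 q)
  rw [Finset.sum_congr rfl (fun q _ => hWq q)]
  rw [← Finset.univ_sigma_univ, Finset.sum_sigma]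
  have hconst : ∀ h : Fin (L+1), ∑ _k : Fin (M (h : ℕ)), W (h : ℕ)
      = (M (h : ℕ) : ℝ) * W (h : ℕ) := by
    intro h
    rw [Finset.sum_const, Finset.card_univ, Fintype.card_fin, nsmul_eq_mul]
  rw [Finset.sum_congr rfl (fun h _ => hconst h)]
  rw [Fin.sum_univ_eq_sum_range (fun h => (M h : ℝ) * W h) (L+1)]
  have hins : Finset.range (L+1) = insert 0 (Finset.Icc 1 L) := by
    ext x; simp only [Finset.mem_range, Finset.mem_insert, Finset.mem_Icc]; omega
  rw [hins, Finset.sum_insert (by simp)]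
  unfold qform
  have hW0 : (M 0 : ℝ) * W 0 = m 0 * (lam 1 * lam 1) * variance (G 1) p := by
    have he : (fun z => m 0 * (lam (0+1) * G (0+1) z - lam 0 * G 0 z))
        = fun z => (m 0 * lam 1) * G 1 z := by
      funext z; rw [hlam0]; ring
    rw [hW]
    simp only [he]
    rw [variance_const_mul]
    have h0 := hMne 0 (by omega)
    rw [hm]
    field_simp
  rw [hW0]
  congr 1
  apply Finset.sum_congr rfl
  intro h hh
  simp only [Finset.mem_Icc] at hh
  have he : (fun z => m h * (lam (h+1) * G (h+1) z - lam h * G h z))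
      = fun z => m h * ((fun z => lam (h+1) * G (h+1) z + (-(lam h)) * G h z) z) := by
    funext z; ring
  rw [hW]
  simp only [he]
  rw [variance_const_mul, var_comb (hGL2 (h+1) (by omega)) (hGL2 h (by omega))]
  have h0 := hMne h hh.2
  rw [hm]
  field_simp
  ring

theorem stmt8 {Ω : Type*} [MeasurableSpace Ω] (P : Measure Ω) [IsProbabilityMeasure P]
    {Z : Type*} [MeasurableSpace Z] (p : Measure Z) [IsProbabilityMeasure p]
    (L : ℕ) (f : ℕ → Z → ℝ)
    (hf : ∀ h, 1 ≤ h → h ≤ L + 1 → MemLp (f h) 2 p)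
    (hvar : ∀ h, 1 ≤ h → h ≤ L → 0 < variance (f h) p)
    (M : ℕ → ℕ) (hM : ∀ h, h ≤ L → 0 < M h)
    (S : ℕ → ℕ → Ω → Z)
    (hindep : iIndepFun
      (fun q : Σ h : Fin (L + 1), Fin (M h) => S q.1 q.2) P)
    (hlaw : ∀ h, h ≤ L → ∀ k, k < M h → Measure.map (S h k) P = p)
    (V : (Fin L → ℝ) → ℝ)
    (hV : ∀ Λ : Fin L → ℝ, V Λ = variance (fun ω =>
      lamExt L Λ 1 * ((M 0 : ℝ)⁻¹ * ∑ k ∈ Finset.range (M 0), f 1 (S 0 k ω))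
        + ∑ h ∈ Finset.Icc 1 L,
            (lamExt L Λ (h + 1) * ((M h : ℝ)⁻¹ * ∑ k ∈ Finset.range (M h), f (h + 1) (S h k ω))
              - lamExt L Λ h * ((M h : ℝ)⁻¹ * ∑ k ∈ Finset.range (M h), f h (S h k ω)))) P) :
    StrictConvexOn ℝ Set.univ V ∧
    (∃! Λstar : Fin L → ℝ, TridiagSystem p L f M Λstar) ∧
    (∀ Λstar : Fin L → ℝ,
      TridiagSystem p L f M Λstar ↔ (∀ Λ : Fin L → ℝ, Λ ≠ Λstar → V Λstar < V Λ)) := by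
  classical
  have hMR : ∀ h, h ≤ L → (0:ℝ) < (M h : ℝ) := fun h hh => by exact_mod_cast hM h hh
  set mm : ℕ → ℝ := fun h => ((M h : ℝ))⁻¹ with hmm
  set vv : ℕ → ℝ := fun h => variance (f h) p with hvv
  set cc : ℕ → ℝ := fun h => covP p (f (h+1)) (f h) with hcc
  -- measurable representatives
  have hrep : ∀ h : ℕ, ∃ g : Z → ℝ, Measurable g ∧ (1 ≤ h → h ≤ L+1 → f h =ᵐ[p] g)
      ∧ (h = 0 → g = fun _ => 0) := by
    intro h
    by_cases hh : 1 ≤ h ∧ h ≤ L + 1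
    · obtain ⟨h1, h2⟩ := hh
      exact ⟨(hf h h1 h2).aestronglyMeasurable.mk (f h),
        (hf h h1 h2).aestronglyMeasurable.stronglyMeasurable_mk.measurable,
        fun _ _ => (hf h h1 h2).aestronglyMeasurable.ae_eq_mk,
        fun h0 => by omega⟩
    · exact ⟨fun _ => 0, measurable_const, fun h1 h2 => absurd ⟨h1, h2⟩ hh, fun _ => rfl⟩
  choose F hFm hFe hF0 using hrep
  have hFL2 : ∀ h, h ≤ L+1 → MemLp (F h) 2 p := by
    intro h hh
    by_cases h1 : 1 ≤ h
    · exact (hf h h1 hh).ae_eq (hFe h h1 hh)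
    · have h0 : h = 0 := by omega
      subst h0
      rw [hF0 0 rfl]
      exact memLp_const 0
  have hvF : ∀ h, 1 ≤ h → h ≤ L+1 → variance (F h) p = vv h := by
    intro h h1 h2
    simp only [hvv]
    exact (variance_congr' (hFe h h1 h2)).symm
  have hcF : ∀ h, 1 ≤ h → h ≤ L → covP p (F (h+1)) (F h) = cc h := by
    intro h h1 h2
    simp only [hcc]
    exact (covP_congr (hFe (h+1) (by omega) (by omega)) (hFe h h1 (by omega))).symm
  -- the variance formula for V
  have hVq : ∀ Λ : Fin L → ℝ, V Λ = qform L mm vv cc (lamExt L Λ) (lamExt L Λ) := by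
    intro Λ
    have hae : ∀ᵐ ω ∂P, ∀ h, h ≤ L → ∀ k, k < M h → ∀ j, 1 ≤ j → j ≤ L+1 →
        f j (S h k ω) = F j (S h k ω) := by
      rw [MeasureTheory.ae_all_iff]
      intro h
      by_cases hh : h ≤ L
      · have hk : ∀ᵐ ω ∂P, ∀ k, k < M h → ∀ j, 1 ≤ j → j ≤ L+1 →
            f j (S h k ω) = F j (S h k ω) := by
          rw [MeasureTheory.ae_all_iff]
          intro k
          by_cases hkM : k < M h
          · have hj : ∀ᵐ ω ∂P, ∀ j, 1 ≤ j → j ≤ L+1 → f j (S h k ω) = F j (S h k ω) := by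
              rw [MeasureTheory.ae_all_iff]
              intro j
              by_cases hjb : 1 ≤ j ∧ j ≤ L + 1
              · have hSae : AEMeasurable (S h k) P :=
                  aemeasurable_of_map_eq (hlaw h hh k hkM)
                have hmapeq : f j =ᵐ[Measure.map (S h k) P] F j := by
                  rw [hlaw h hh k hkM]; exact hFe j hjb.1 hjb.2
                have hcomp := MeasureTheory.ae_eq_comp hSae hmapeq
                filter_upwards [hcomp] with ω hω _ _
                exact hω
              · filter_upwards with ω h1 h2
                exact absurd ⟨h1, h2⟩ hjb
            filter_upwards [hj] with ω hω _
            exact hω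
          · filter_upwards with ω hk'
            exact absurd hk' hkM
        filter_upwards [hk] with ω hω _
        exact hω
      · filter_upwards with ω hh'
        exact absurd hh' hh
    have haeq : (fun ω => lamExt L Λ 1 * ((M 0 : ℝ)⁻¹ * ∑ k ∈ Finset.range (M 0), f 1 (S 0 k ω))
          + ∑ h ∈ Finset.Icc 1 L,
              (lamExt L Λ (h + 1) * ((M h : ℝ)⁻¹ * ∑ k ∈ Finset.range (M h), f (h + 1) (S h k ω))
                - lamExt L Λ h * ((M h : ℝ)⁻¹ * ∑ k ∈ Finset.range (M h), f h (S h k ω))))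
        =ᵐ[P] (fun ω => ∑ h ∈ Finset.range (L+1), ((M h : ℝ)⁻¹
          * ∑ k ∈ Finset.range (M h), (lamExt L Λ (h+1) * F (h+1) (S h k ω)
              - lamExt L Λ h * F h (S h k ω)))) := by
      filter_upwards [hae] with ω hω
      have hins : Finset.range (L+1) = insert 0 (Finset.Icc 1 L) := by
        ext x; simp only [Finset.mem_range, Finset.mem_insert, Finset.mem_Icc]; omega
      rw [hins, Finset.sum_insert (by simp)]
      congr 1
      · have h0 : ∀ k ∈ Finset.range (M 0),
            lamExt L Λ (0+1) * F (0+1) (S 0 k ω) - lamExt L Λ 0 * F 0 (S 0 k ω)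
              = lamExt L Λ 1 * f 1 (S 0 k ω) := by
          intro k hk
          rw [← hω 0 (by omega) k (Finset.mem_range.mp hk) 1 (by omega) (by omega)]
          rw [lamExt_zero]
          norm_num
        rw [Finset.sum_congr rfl h0, ← Finset.mul_sum]
        ring
      · apply Finset.sum_congr rfl
        intro h hh
        simp only [Finset.mem_Icc] at hh
        have h1 : ∀ k ∈ Finset.range (M h),
            lamExt L Λ (h+1) * F (h+1) (S h k ω) - lamExt L Λ h * F h (S h k ω)
              = lamExt L Λ (h+1) * f (h+1) (S h k ω) - lamExt L Λ h * f h (S h k ω) := by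
          intro k hk
          rw [← hω h (by omega) k (Finset.mem_range.mp hk) (h+1) (by omega) (by omega),
            ← hω h (by omega) k (Finset.mem_range.mp hk) h (by omega) (by omega)]
        rw [Finset.sum_congr rfl h1, Finset.sum_sub_distrib, ← Finset.mul_sum, ← Finset.mul_sum]
        ring
    rw [hV Λ, variance_congr' haeq,
      estimator_variance P p L F hFm hFL2 M hM S hindep hlaw (lamExt L Λ) (lamExt_zero Λ)]
    exact qform_congr _ _ (fun h h1 h2 => hvF h h1 h2) (fun h h1 h2 => hcF h h1 h2)
  -- positivity of the homogeneous quadratic form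
  have hpos : ∀ Δ : Fin L → ℝ, Δ ≠ 0 → 0 < qform L mm vv cc (lam0 L Δ) (lam0 L Δ) := by
    intro Δ hΔ
    rcases Nat.eq_zero_or_pos L with hL0 | hL1
    · exfalso; apply hΔ; funext j; exact absurd j.isLt (by omega)
    set μ := lam0 L Δ with hμ
    have hterm : ∀ h, 1 ≤ h → h ≤ L →
        (μ (h+1) * μ (h+1)) * vv (h+1) + (μ h * μ h) * vv h
          - (μ (h+1) * μ h + μ h * μ (h+1)) * cc h
        = variance (fun z => μ (h+1) * f (h+1) z + (-(μ h)) * f h z) p := by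
      intro h h1 h2
      rw [var_comb (hf (h+1) (by omega) (by omega)) (hf h h1 (by omega))]
      simp only [hvv, hcc]
      ring
    have hsum_nonneg : ∀ h ∈ Finset.Icc 1 L,
        0 ≤ mm h * ((μ (h+1) * μ (h+1)) * vv (h+1) + (μ h * μ h) * vv h
          - (μ (h+1) * μ h + μ h * μ (h+1)) * cc h) := by
      intro h hh
      simp only [Finset.mem_Icc] at hh
      rw [hterm h hh.1 hh.2]
      apply mul_nonneg
      · simp only [hmm]; positivity
      · exact variance_nonneg _ _
    have hhead_nonneg : 0 ≤ mm 0 * (μ 1 * μ 1) * vv 1 := by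
      have hv1 : 0 ≤ vv 1 := by simp only [hvv]; exact variance_nonneg _ _
      have hm0 : (0:ℝ) ≤ mm 0 := by simp only [hmm]; positivity
      exact mul_nonneg (mul_nonneg hm0 (mul_self_nonneg _)) hv1
    have hq_nonneg : 0 ≤ qform L mm vv cc μ μ := by
      unfold qform
      exact add_nonneg hhead_nonneg (Finset.sum_nonneg hsum_nonneg)
    rcases lt_or_eq_of_le hq_nonneg with hlt | heq
    · exact hlt
    exfalso
    have hq0 := heq.symm
    unfold qform at hq0
    have hsumnn := Finset.sum_nonneg hsum_nonneg
    have hh0 : mm 0 * (μ 1 * μ 1) * vv 1 = 0 := le_antisymm (by linarith) hhead_nonneg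
    have hs0 : ∑ h ∈ Finset.Icc 1 L,
        mm h * ((μ (h+1) * μ (h+1)) * vv (h+1) + (μ h * μ h) * vv h
          - (μ (h+1) * μ h + μ h * μ (h+1)) * cc h) = 0 := by linarith
    have hterm0 := (Finset.sum_eq_zero_iff_of_nonneg hsum_nonneg).mp hs0
    have hmm0 : (0:ℝ) < mm 0 := by
      simp only [hmm]; exact inv_pos.mpr (hMR 0 (by omega))
    have hvv1 : 0 < vv 1 := by simp only [hvv]; exact hvar 1 le_rfl hL1
    have hμ1 : μ 1 = 0 := by
      have h3 : μ 1 * μ 1 = 0 := by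
        rcases mul_eq_zero.mp hh0 with h | h
        · rcases mul_eq_zero.mp h with h' | h'
          · exact absurd h' (ne_of_gt hmm0)
          · exact h'
        · exact absurd h (ne_of_gt hvv1)
      exact mul_self_eq_zero.mp h3
    have hzero : ∀ n, n ≤ L → μ n = 0 := by
      intro n
      induction n with
      | zero => intro _; rw [hμ]; exact lam0_zero Δ
      | succ n ih =>
        intro hnL
        rcases Nat.eq_zero_or_pos n with hn0 | hn1
        · subst hn0; exact hμ1
        · have hn := ih (by omega)
          have ht := hterm0 n (Finset.mem_Icc.mpr ⟨by omega, by omega⟩)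
          have hmn : mm n ≠ 0 := by
            simp only [hmm]
            exact inv_ne_zero (ne_of_gt (hMR n (by omega)))
          have hcomb : (μ (n+1) * μ (n+1)) * vv (n+1) + (μ n * μ n) * vv n
              - (μ (n+1) * μ n + μ n * μ (n+1)) * cc n = 0 := by
            rcases mul_eq_zero.mp ht with h | h
            · exact absurd h hmn
            · exact h
          rw [hn] at hcomb
          have h2 : (μ (n+1) * μ (n+1)) * vv (n+1) = 0 := by linear_combination hcomb
          have hvpos : 0 < vv (n+1) := by
            simp only [hvv]; exact hvar (n+1) (by omega) hnL
          have h3 : μ (n+1) * μ (n+1) = 0 := by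
            rcases mul_eq_zero.mp h2 with h | h
            · exact h
            · exact absurd h (ne_of_gt hvpos)
          exact mul_self_eq_zero.mp h3
    apply hΔ
    funext j
    have hz := hzero (↑j + 1) (by have := j.isLt; omega)
    rw [hμ, lam0_mid Δ (↑j+1) (by omega) (by have := j.isLt; omega)] at hz
    have hjj : (⟨↑j + 1 - 1, by have := j.isLt; omega⟩ : Fin L) = j := by
      rw [Fin.ext_iff]; simp
    rw [hjj] at hz
    exact hz
  -- link between the tridiagonal system and the quadratic form
  have hkey : ∀ (Λ : Fin L → ℝ) i, 1 ≤ i → i ≤ L →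
      qform L mm vv cc (lamExt L Λ) (ind i)
        = ((M (i-1) : ℝ)⁻¹ + (M i : ℝ)⁻¹)
          * (lamExt L Λ i * variance (f i) p
            - lamExt L Λ (i-1) * ((M i : ℝ) / ((M (i-1) : ℝ) + (M i : ℝ))) * covP p (f i) (f (i-1))
            - lamExt L Λ (i+1) * ((M (i-1) : ℝ) / ((M (i-1) : ℝ) + (M i : ℝ)))
                * covP p (f (i+1)) (f i)) := by
    intro Λ i h1 h2
    rw [qform_ind (lamExt L Λ) (lamExt_zero Λ) i h1 h2]
    have hx := hMR (i-1) (by omega)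
    have hy := hMR i h2
    have hx0 : ((M (i-1) : ℝ)) ≠ 0 := ne_of_gt hx
    have hy0 : ((M i : ℝ)) ≠ 0 := ne_of_gt hy
    have hxy0 : ((M (i-1) : ℝ) + (M i : ℝ)) ≠ 0 := by positivity
    have hi1 : i - 1 + 1 = i := by omega
    simp only [hmm, hvv, hcc, hi1]
    field_simp
    ring
  have htri : ∀ Λ : Fin L → ℝ, TridiagSystem p L f M Λ ↔
      (∀ i, 1 ≤ i → i ≤ L → qform L mm vv cc (lamExt L Λ) (ind i) = 0) := by
    intro Λ
    constructor
    · intro hT i h1 h2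
      rw [hkey Λ i h1 h2, hT i h1 h2, mul_zero]
    · intro hQ i h1 h2
      have h3 := hQ i h1 h2
      rw [hkey Λ i h1 h2] at h3
      have hx := hMR (i-1) (by omega)
      have hy := hMR i h2
      have hfac : (0:ℝ) < (M (i-1) : ℝ)⁻¹ + (M i : ℝ)⁻¹ := by positivity
      rcases mul_eq_zero.mp h3 with h | h
      · exact absurd h (ne_of_gt hfac)
      · exact h
  -- directional decomposition
  have hdir : ∀ (μ : ℕ → ℝ) (E : Fin L → ℝ),
      qform L mm vv cc μ (lam0 L E)
        = ∑ j : Fin L, E j * qform L mm vv cc μ (ind (↑j + 1)) := by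
    intro μ E
    rw [lam0_eq_sum E, qform_sum_right Finset.univ (fun j => fun n => E j * ind (↑j + 1) n) μ]
    exact Finset.sum_congr rfl fun j _ => qform_smul_right _ _ _
  -- the linear system
  let T : (Fin L → ℝ) →ₗ[ℝ] (Fin L → ℝ) :=
    { toFun := fun Δ => fun j => qform L mm vv cc (lam0 L Δ) (ind (↑j + 1))
      map_add' := fun x y => by
        funext j
        show qform L mm vv cc (lam0 L (x + y)) (ind (↑j + 1)) = _
        rw [lam0_add, qform_add_left]
        rfl
      map_smul' := fun a x => by
        funext j
        show qform L mm vv cc (lam0 L (a • x)) (ind (↑j + 1)) = _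
        rw [lam0_smul, qform_smul_left]
        rfl }
  have hTapp : ∀ (Δ : Fin L → ℝ) (j : Fin L),
      T Δ j = qform L mm vv cc (lam0 L Δ) (ind (↑j + 1)) := fun _ _ => rfl
  have hTinj : Function.Injective T := by
    rw [injective_iff_map_eq_zero]
    intro Δ hΔ0
    by_contra hne
    have h1 : qform L mm vv cc (lam0 L Δ) (lam0 L Δ) = 0 := by
      rw [hdir (lam0 L Δ) Δ]
      apply Finset.sum_eq_zero
      intro j _
      rw [← hTapp Δ j, hΔ0]
      simp
    exact (hpos Δ hne).ne' h1
  have hTsurj : Function.Surjective T := LinearMap.injective_iff_surjective.mp hTinj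
  obtain ⟨Δ0, hΔ0⟩ := hTsurj (fun j => - qform L mm vv cc (ind (L+1)) (ind (↑j + 1)))
  have hΔ0tri : TridiagSystem p L f M Δ0 := by
    apply (htri Δ0).mpr
    intro i h1 h2
    have hji : ((⟨i - 1, by omega⟩ : Fin L) : ℕ) + 1 = i := by simp; omega
    have hji2 := congrFun hΔ0 (⟨i - 1, by omega⟩ : Fin L)
    rw [hTapp Δ0 (⟨i - 1, by omega⟩ : Fin L)] at hji2
    simp only [hji] at hji2
    have hdec : qform L mm vv cc (lamExt L Δ0) (ind i)
        = qform L mm vv cc (lam0 L Δ0) (ind i) + qform L mm vv cc (ind (L+1)) (ind i) := by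
      rw [lamExt_eq_lam0_add Δ0, qform_add_left]
    rw [hdec, hji2]
    ring
  -- perturbation identity
  have hstep : ∀ (Λs : Fin L → ℝ) (t : ℝ) (jj : Fin L),
      V (Λs + t • (Pi.single jj 1 : Fin L → ℝ)) = V Λs
        + 2 * (t * qform L mm vv cc (lamExt L Λs) (ind (↑jj + 1)))
        + t * (t * qform L mm vv cc (ind (↑jj + 1)) (ind (↑jj + 1))) := by
    intro Λs t jj
    rw [hVq, hVq, lamExt_add_smul, qform_expand, qform_smul_right, qform_smul_left,
      qform_smul_right, lam0_single]
  -- characterization of the tridiagonal system as strict minimality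
  have hchar : ∀ Λstar : Fin L → ℝ,
      TridiagSystem p L f M Λstar ↔ (∀ Λ : Fin L → ℝ, Λ ≠ Λstar → V Λstar < V Λ) := by
    intro Λs
    constructor
    · intro hT Λ hne
      have hG := (htri Λs).mp hT
      have hdecomp : lamExt L Λ = fun n => lamExt L Λs n + lam0 L (Λ - Λs) n := by
        funext n
        have h := congrFun (lamExt_sub Λ Λs) n
        linarith
      rw [hVq Λ, hVq Λs, hdecomp, qform_expand]
      have hmid : qform L mm vv cc (lamExt L Λs) (lam0 L (Λ - Λs)) = 0 := by
        rw [hdir]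
        apply Finset.sum_eq_zero
        intro j _
        rw [hG (↑j + 1) (by omega) (by have := j.isLt; omega), mul_zero]
      rw [hmid]
      have hgt := hpos (Λ - Λs) (sub_ne_zero.mpr hne)
      linarith
    · intro hmin
      apply (htri Λs).mpr
      intro i h1 h2
      have hji : ((⟨i - 1, by omega⟩ : Fin L) : ℕ) + 1 = i := by simp; omega
      rw [← hji]
      set jj : Fin L := (⟨i - 1, by omega⟩ : Fin L) with hjjdef
      have hene : (Pi.single jj (1:ℝ) : Fin L → ℝ) ≠ 0 := by
        intro hcon
        have h5 := congrFun hcon jj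
        rw [Pi.single_eq_same] at h5
        simp at h5
      have hqe : 0 < qform L mm vv cc (ind (↑jj + 1)) (ind (↑jj + 1)) := by
        have := hpos (Pi.single jj 1) hene
        rwa [lam0_single] at this
      have hkey2 : ∀ t : ℝ, t ≠ 0 →
          0 < 2 * (t * qform L mm vv cc (lamExt L Λs) (ind (↑jj + 1)))
            + t * (t * qform L mm vv cc (ind (↑jj + 1)) (ind (↑jj + 1))) := by
        intro t ht
        have hne2 : Λs + t • (Pi.single jj 1 : Fin L → ℝ) ≠ Λs := by
          intro hcon
          have h5 := congrFun hcon jj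
          simp only [Pi.add_apply, Pi.smul_apply, Pi.single_eq_same, smul_eq_mul, mul_one] at h5
          exact ht (by linarith)
        have h6 := hmin (Λs + t • (Pi.single jj 1 : Fin L → ℝ)) hne2
        have h7 := hstep Λs t jj
        linarith
      by_contra hgne
      have hqene : qform L mm vv cc (ind (↑jj + 1)) (ind (↑jj + 1)) ≠ 0 := ne_of_gt hqe
      set g := qform L mm vv cc (lamExt L Λs) (ind (↑jj + 1)) with hgdef
      set qe := qform L mm vv cc (ind (↑jj + 1)) (ind (↑jj + 1)) with hqedef
      have h8 := hkey2 (-g / qe) (by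
        intro hcon
        apply hgne
        rcases div_eq_zero_iff.mp hcon with h | h
        · linarith [neg_eq_zero.mp h]
        · exact absurd h hqene)
      have h9 : 2 * ((-g / qe) * g) + (-g / qe) * ((-g / qe) * qe) = -(g^2 / qe) := by
        field_simp
        ring
      rw [h9] at h8
      have h10 : 0 ≤ g^2 / qe := div_nonneg (sq_nonneg g) hqe.le
      linarith
  refine ⟨?_, ⟨Δ0, hΔ0tri, ?_⟩, hchar⟩
  · -- strict convexity
    constructor
    · exact convex_univ
    · intro x _ y _ hxy a b ha hb hab
      simp only [smul_eq_mul]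
      rw [hVq (a • x + b • y), hVq x, hVq y, lamExt_affine a b hab x y]
      rw [qform_bilin, qform_bilin_right, qform_bilin_right,
        qform_symm (lamExt L y) (lamExt L x)]
      have hd := hpos (x - y) (sub_ne_zero.mpr hxy)
      have hqd : qform L mm vv cc (lam0 L (x - y)) (lam0 L (x - y))
          = qform L mm vv cc (lamExt L x) (lamExt L x)
            - 2 * qform L mm vv cc (lamExt L x) (lamExt L y)
            + qform L mm vv cc (lamExt L y) (lamExt L y) := by
        rw [← lamExt_sub x y]
        have h1 : (fun n => lamExt L x n - lamExt L y n)
            = fun n => 1 * lamExt L x n + (-1) * lamExt L y n := by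
          funext n; ring
        rw [h1, qform_bilin, qform_bilin_right, qform_bilin_right,
          qform_symm (lamExt L y) (lamExt L x)]
        ring
      have hpos2 : 0 < qform L mm vv cc (lamExt L x) (lamExt L x)
          - 2 * qform L mm vv cc (lamExt L x) (lamExt L y)
          + qform L mm vv cc (lamExt L y) (lamExt L y) := by
        rw [← hqd]; exact hd
      have hb' : b = 1 - a := by linarith
      rw [hb']
      have hb2 : (0:ℝ) < 1 - a := by linarith
      have hfin := mul_pos (mul_pos ha hb2) hpos2
      nlinarith [hfin]
  · -- uniqueness
    intro y hy
    by_contra hne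
    have h1 := (hchar y).mp hy Δ0 (fun hc => hne hc.symm)
    have h2 := (hchar Δ0).mp hΔ0tri y hne
    linarith
end

section
/- Let (Y_k, W_k, E_k)_{k=1}^M be i.i.d. triples of real square-integrable random variables (the M triples mutually independent and identically distributed), with E[Y_k] = m, Var(Y_k) = ν² > 0, Var(W_k) > 0, E[E_k | (Y_k, W_k)] = 0 almost surely, and E[E_k²] ≤ σ²/N. Set λ* = Cov(Y_1, W_1)/Var(W_1), let ρ be the correlation coefficient of Y_1 and W_1, and define the mean-field control-variate estimator A = (1/M)∑_{k=1}^M (Y_k + E_k) − λ* ( (1/M)∑_{k=1}^M W_k − E[W_1] ). Then E[ (m − A)² ]^{1/2} ≤ (1 − ρ²)^{1/2} ν / M^{1/2} + σ / N^{1/2}. -/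
open MeasureTheory ProbabilityTheory

/-- Correlation coefficient of two real random variables. -/
noncomputable def corr {Ω : Type*} [MeasurableSpace Ω] (P : Measure Ω) (X Y : Ω → ℝ) : ℝ :=
  cov P X Y / (Real.sqrt (variance X P) * Real.sqrt (variance Y P))

section helpers
variable {Ω : Type*} [MeasurableSpace Ω] {P : Measure Ω} [IsProbabilityMeasure P]

lemma mulInt (f g : Ω → ℝ) (hf : MemLp f 2 P) (hg : MemLp g 2 P) :
    Integrable (fun ω => f ω * g ω) P := by
  have h1 : MemLp (f • g) 1 P := by
    haveI : ENNReal.HolderConjugate 2 2 := ENNReal.holderConjugate_iff.mpr ENNReal.inv_two_add_inv_two; exact hg.smul hf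
  rw [← memLp_one_iff_integrable]
  exact h1

lemma csInt (f g : Ω → ℝ) (hf : MemLp f 2 P) (hg : MemLp g 2 P) :
    ∫ ω, f ω * g ω ∂P ≤ Real.sqrt (∫ ω, f ω ^ 2 ∂P) * Real.sqrt (∫ ω, g ω ^ 2 ∂P) := by
  have hfg : Integrable (fun ω => f ω * g ω) P := mulInt f g hf hg
  have habs : Integrable (fun ω => |f ω| * |g ω|) P := by
    simpa [abs_mul] using hfg.abs
  have h2 : ∫ ω, f ω * g ω ∂P ≤ ∫ ω, |f ω| * |g ω| ∂P := by
    refine integral_mono hfg habs fun ω => ?_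
    rw [← abs_mul]; exact le_abs_self _
  have hCS := MeasureTheory.integral_mul_le_Lp_mul_Lq_of_nonneg
    Real.HolderConjugate.two_two
    (ae_of_all P fun ω => abs_nonneg (f ω))
    (ae_of_all P fun ω => abs_nonneg (g ω)) ?_ ?_
  · calc ∫ ω, f ω * g ω ∂P ≤ ∫ ω, |f ω| * |g ω| ∂P := h2
      _ ≤ (∫ ω, |f ω| ^ (2:ℝ) ∂P) ^ ((1:ℝ)/2) * (∫ ω, |g ω| ^ (2:ℝ) ∂P) ^ ((1:ℝ)/2) := hCS
      _ = Real.sqrt (∫ ω, f ω ^ 2 ∂P) * Real.sqrt (∫ ω, g ω ^ 2 ∂P) := by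
          have e1 : ∫ ω, |f ω| ^ (2:ℝ) ∂P = ∫ ω, f ω ^ 2 ∂P := by
            refine integral_congr_ae (ae_of_all _ fun ω => ?_)
            simp [Real.rpow_two, sq_abs]
          have e2 : ∫ ω, |g ω| ^ (2:ℝ) ∂P = ∫ ω, g ω ^ 2 ∂P := by
            refine integral_congr_ae (ae_of_all _ fun ω => ?_)
            simp [Real.rpow_two, sq_abs]
          rw [e1, e2, Real.sqrt_eq_rpow, Real.sqrt_eq_rpow]
  · simpa [show ENNReal.ofReal (2:ℝ) = 2 by norm_num] using hf.norm
  · simpa [show ENNReal.ofReal (2:ℝ) = 2 by norm_num] using hg.norm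

lemma l2Add (f g : Ω → ℝ) (hf : MemLp f 2 P) (hg : MemLp g 2 P) :
    Real.sqrt (∫ ω, (f ω + g ω) ^ 2 ∂P)
      ≤ Real.sqrt (∫ ω, f ω ^ 2 ∂P) + Real.sqrt (∫ ω, g ω ^ 2 ∂P) := by
  set a := ∫ ω, f ω ^ 2 ∂P with ha'
  set b := ∫ ω, g ω ^ 2 ∂P with hb'
  have ha : 0 ≤ a := integral_nonneg fun ω => sq_nonneg _
  have hb : 0 ≤ b := integral_nonneg fun ω => sq_nonneg _
  have hfg : Integrable (fun ω => f ω * g ω) P := mulInt f g hf hg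
  have expand : ∫ ω, (f ω + g ω) ^ 2 ∂P = a + (2 * ∫ ω, f ω * g ω ∂P + b) := by
    have : ∀ ω, (f ω + g ω) ^ 2 = f ω ^ 2 + (2 * (f ω * g ω) + g ω ^ 2) := fun ω => by ring
    simp_rw [this]
    have i1 : Integrable (fun ω => 2 * (f ω * g ω) + g ω ^ 2) P :=
      (hfg.const_mul 2).add hg.integrable_sq
    rw [integral_add hf.integrable_sq i1, integral_add (hfg.const_mul 2) hg.integrable_sq,
      integral_const_mul]
  have hcs := csInt f g hf hg
  have h1 : ∫ ω, (f ω + g ω) ^ 2 ∂P ≤ (Real.sqrt a + Real.sqrt b) ^ 2 := by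
    rw [expand]
    nlinarith [Real.sq_sqrt ha, Real.sq_sqrt hb, Real.sqrt_nonneg a, Real.sqrt_nonneg b]
  calc Real.sqrt (∫ ω, (f ω + g ω) ^ 2 ∂P) ≤ Real.sqrt ((Real.sqrt a + Real.sqrt b) ^ 2) :=
        Real.sqrt_le_sqrt h1
    _ = Real.sqrt a + Real.sqrt b := Real.sqrt_sq (by positivity)

lemma l2Sum {ι : Type*} (s : Finset ι) (f : ι → Ω → ℝ) (hf : ∀ i ∈ s, MemLp (f i) 2 P) :
    Real.sqrt (∫ ω, (∑ i ∈ s, f i ω) ^ 2 ∂P) ≤ ∑ i ∈ s, Real.sqrt (∫ ω, f i ω ^ 2 ∂P) := by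
  classical
  induction s using Finset.induction_on with
  | empty => simp
  | @insert a s hins ih =>
      have hs : ∀ i ∈ s, MemLp (f i) 2 P := fun i hi => hf i (Finset.mem_insert_of_mem hi)
      have hsum : MemLp (fun ω => ∑ i ∈ s, f i ω) 2 P := memLp_finset_sum s hs
      simp_rw [Finset.sum_insert hins]
      calc Real.sqrt (∫ ω, (f a ω + ∑ i ∈ s, f i ω) ^ 2 ∂P)
          ≤ Real.sqrt (∫ ω, f a ω ^ 2 ∂P) + Real.sqrt (∫ ω, (∑ i ∈ s, f i ω) ^ 2 ∂P) :=
            l2Add _ _ (hf a (Finset.mem_insert_self a s)) hsum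
        _ ≤ _ := by gcongr; exact ih hs

lemma varInt (f : Ω → ℝ) (hf : MemLp f 2 P) :
    variance f P = ∫ ω, (f ω - ∫ ω', f ω' ∂P) ^ 2 ∂P := by
  rw [variance_eq_integral hf.aestronglyMeasurable.aemeasurable]

end helpers

/-- for i.i.d. triples `(Y_k, W_k, E_k)` with `E[Y_k] = m`, `Var(Y_k) = ν² > 0`,
`Var(W_k) > 0`, `E[E_k | (Y_k, W_k)] = 0` a.s., `E[E_k²] ≤ σ²/N`, the mean-field
control-variate estimator `A = (1/M)∑(Y_k + E_k) − λ*((1/M)∑W_k − E[W_1])` with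
`λ* = Cov(Y_1,W_1)/Var(W_1)` satisfies
`E[(m − A)²]^{1/2} ≤ (1 − ρ²)^{1/2} ν/M^{1/2} + σ/N^{1/2}`. -/
theorem stmt12 {Ω : Type*} [MeasurableSpace Ω] (P : Measure Ω) [IsProbabilityMeasure P]
    (M N : ℕ) (hM : 0 < M) (hN : 0 < N)
    (Y W E : Fin M → Ω → ℝ)
    (hY2 : ∀ k, MemLp (Y k) 2 P) (hW2 : ∀ k, MemLp (W k) 2 P) (hE2 : ∀ k, MemLp (E k) 2 P)
    (hindep : iIndepFun
      (fun k ω => (Y k ω, W k ω, E k ω)) P)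
    (hident : ∀ j k, Measure.map (fun ω => (Y j ω, W j ω, E j ω)) P
      = Measure.map (fun ω => (Y k ω, W k ω, E k ω)) P)
    (m ν σ : ℝ) (hν : 0 ≤ ν) (hσ : 0 ≤ σ)
    (hmean : ∀ k, ∫ ω, Y k ω ∂P = m)
    (hvar : ∀ k, variance (Y k) P = ν ^ 2) (hνpos : 0 < ν ^ 2)
    (hvarW : ∀ k, 0 < variance (W k) P)
    (hcond : ∀ k, P[E k|MeasurableSpace.comap (fun ω => (Y k ω, W k ω))
      (inferInstance : MeasurableSpace (ℝ × ℝ))] =ᵐ[P] 0)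
    (hnoise : ∀ k, ∫ ω, (E k ω) ^ 2 ∂P ≤ σ ^ 2 / N)
    (lamStar ρ : ℝ)
    (hlam : lamStar = cov P (Y ⟨0, hM⟩) (W ⟨0, hM⟩) / variance (W ⟨0, hM⟩) P)
    (hρ : ρ = corr P (Y ⟨0, hM⟩) (W ⟨0, hM⟩))
    (A : Ω → ℝ)
    (hA : ∀ ω, A ω = (M : ℝ)⁻¹ * ∑ k, (Y k ω + E k ω)
      - lamStar * ((M : ℝ)⁻¹ * ∑ k, W k ω - ∫ ω', W ⟨0, hM⟩ ω' ∂P)) :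
    Real.sqrt (∫ ω, (m - A ω) ^ 2 ∂P)
      ≤ Real.sqrt (1 - ρ ^ 2) * ν / Real.sqrt M + σ / Real.sqrt N := by
  classical
  set k0 : Fin M := ⟨0, hM⟩ with hk0
  set mw : ℝ := ∫ ω, W k0 ω ∂P with hmw
  set v : ℝ := variance (W k0) P with hv'
  set c : ℝ := cov P (Y k0) (W k0) with hc'
  have hv : 0 < v := hvarW k0
  have hMne : (M : ℝ) ≠ 0 := Nat.cast_ne_zero.mpr hM.ne'
  have hνne : ν ≠ 0 := fun h => by simp [h] at hνpos
  -- transfer lemma from identical distribution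
  have hAE : ∀ k, AEMeasurable (fun ω => (Y k ω, W k ω, E k ω)) P := fun k =>
    ((hY2 k).aestronglyMeasurable.aemeasurable.prodMk
      (((hW2 k).aestronglyMeasurable.aemeasurable).prodMk
        (hE2 k).aestronglyMeasurable.aemeasurable))
  have transfer : ∀ (k : Fin M) (g : ℝ × ℝ × ℝ → ℝ), Measurable g →
      ∫ ω, g (Y k ω, W k ω, E k ω) ∂P = ∫ ω, g (Y k0 ω, W k0 ω, E k0 ω) ∂P := by
    intro k g hg
    rw [← integral_map (hAE k) hg.aestronglyMeasurable, hident k k0,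
      integral_map (hAE k0) hg.aestronglyMeasurable]
  have hEW : ∀ k, ∫ ω, W k ω ∂P = mw := by
    intro k
    have := transfer k (fun p => p.2.1) (measurable_fst.comp measurable_snd)
    simpa using this
  have hVW : ∀ k, ∫ ω, (W k ω - mw) ^ 2 ∂P = v := by
    intro k
    have h0 : ∫ ω, (W k0 ω - mw) ^ 2 ∂P = v := by
      rw [hv', varInt _ (hW2 k0)]
    have := transfer k (fun p => (p.2.1 - mw) ^ 2)
      (((measurable_fst.comp measurable_snd).sub measurable_const).pow_const 2)
    simpa [h0] using this
  have hCov : ∀ k, ∫ ω, (Y k ω - m) * (W k ω - mw) ∂P = c := by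
    intro k
    have h0 : ∫ ω, (Y k0 ω - m) * (W k0 ω - mw) ∂P = c := by
      rw [hc', cov, hmean k0]
    have := transfer k (fun p => (p.1 - m) * (p.2.1 - mw))
      ((measurable_fst.sub measurable_const).mul
        ((measurable_fst.comp measurable_snd).sub measurable_const))
    simpa [h0] using this
  have hVarY : ∀ k, ∫ ω, (Y k ω - m) ^ 2 ∂P = ν ^ 2 := by
    intro k
    have := varInt _ (hY2 k)
    rw [hmean k] at this
    rw [← this, hvar k]
  -- the control variate variables
  set X : Fin M → Ω → ℝ := fun k ω => Y k ω - lamStar * W k ω with hX'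
  have hX2 : ∀ k, MemLp (X k) 2 P := fun k => (hY2 k).sub ((hW2 k).const_mul lamStar)
  have hintX : ∀ k, ∫ ω, X k ω ∂P = m - lamStar * mw := by
    intro k
    rw [hX']
    rw [integral_sub ((hY2 k).integrable one_le_two)
      (((hW2 k).integrable one_le_two).const_mul lamStar), integral_const_mul, hmean k, hEW k]
  set κ : ℝ := ν ^ 2 - c ^ 2 / v with hκ'
  have hXvar : ∀ k, variance (X k) P = κ := by
    intro k
    rw [varInt _ (hX2 k), hintX k]
    have e : ∀ ω, (X k ω - (m - lamStar * mw)) ^ 2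
        = (Y k ω - m) ^ 2 - (2 * lamStar) * ((Y k ω - m) * (W k ω - mw))
          + lamStar ^ 2 * (W k ω - mw) ^ 2 := fun ω => by rw [hX']; ring
    simp_rw [e]
    have iY : Integrable (fun ω => (Y k ω - m) ^ 2) P :=
      ((hY2 k).sub (memLp_const m)).integrable_sq
    have iW : Integrable (fun ω => (W k ω - mw) ^ 2) P :=
      ((hW2 k).sub (memLp_const mw)).integrable_sq
    have iYW : Integrable (fun ω => (Y k ω - m) * (W k ω - mw)) P :=
      mulInt _ _ ((hY2 k).sub (memLp_const m)) ((hW2 k).sub (memLp_const mw))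
    have iA : Integrable
        (fun ω => (Y k ω - m) ^ 2 - (2 * lamStar) * ((Y k ω - m) * (W k ω - mw))) P :=
      iY.sub (iYW.const_mul _)
    have iB : Integrable (fun ω => lamStar ^ 2 * (W k ω - mw) ^ 2) P := iW.const_mul _
    rw [integral_add iA iB, integral_sub iY (iYW.const_mul _), integral_const_mul,
      integral_const_mul,
      hVarY k, hCov k, hVW k, hκ', hlam]
    field_simp
    ring
  have hκ0 : 0 ≤ κ := (hXvar k0) ▸ variance_nonneg (X k0) P
  -- pairwise independence of the X's
  have hgm : Measurable (fun p : ℝ × ℝ × ℝ => p.1 - lamStar * p.2.1) :=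
    measurable_fst.sub ((measurable_fst.comp measurable_snd).const_mul lamStar)
  have hXindep : Set.Pairwise ↑(Finset.univ : Finset (Fin M))
      (fun i j => IndepFun (X i) (X j) P) := by
    intro i _ j _ hij
    exact (hindep.indepFun hij).comp hgm hgm
  -- variance of the averaged control variate part
  have hSvar : variance (fun ω => ∑ k, X k ω) P = M * κ := by
    have h1 : variance (∑ k, X k) P = ∑ k, variance (X k) P :=
      IndepFun.variance_sum (fun k _ => hX2 k) hXindep
    have h2 : (fun ω => ∑ k, X k ω) = ∑ k, X k := by
      funext ω; simp [Finset.sum_apply]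
    rw [h2, h1]
    simp [hXvar, Finset.sum_const, Finset.card_univ, nsmul_eq_mul]
  set g : Ω → ℝ := fun ω => (M : ℝ)⁻¹ * ∑ k, X k ω with hg'
  have hgL2 : MemLp g 2 P := (memLp_finset_sum Finset.univ fun k _ => hX2 k).const_mul _
  have hgvar : variance g P = (M : ℝ)⁻¹ ^ 2 * (M * κ) := by
    rw [hg']
    rw [variance_const_mul ((M : ℝ)⁻¹) (fun ω => ∑ k, X k ω) P, hSvar]
  have hgint : ∫ ω, g ω ∂P = m - lamStar * mw := by
    rw [hg', integral_const_mul,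
      integral_finset_sum Finset.univ fun k _ => (hX2 k).integrable one_le_two]
    simp only [hintX]
    rw [Finset.sum_const, Finset.card_univ, Fintype.card_fin, nsmul_eq_mul]
    field_simp
  set f1 : Ω → ℝ := fun ω => (m - lamStar * mw) - g ω with hf1'
  set f2 : Ω → ℝ := fun ω => -((M : ℝ)⁻¹ * ∑ k, E k ω) with hf2'
  have hf1L2 : MemLp f1 2 P := (memLp_const _).sub hgL2
  have hf2L2 : MemLp f2 2 P :=
    ((memLp_finset_sum Finset.univ fun k _ => hE2 k).const_mul _).neg
  have hdecomp : ∀ ω, m - A ω = f1 ω + f2 ω := by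
    intro ω
    rw [hA ω, hf1', hf2', hg', hX']
    simp only [Finset.sum_add_distrib, Finset.sum_sub_distrib, ← Finset.mul_sum]
    ring
  have hint1 : ∫ ω, f1 ω ^ 2 ∂P = variance g P := by
    rw [varInt g hgL2, hgint]
    refine integral_congr_ae (ae_of_all _ fun ω => ?_)
    rw [hf1']
    ring
  -- first term
  have hterm1 : Real.sqrt (∫ ω, f1 ω ^ 2 ∂P) = Real.sqrt (1 - ρ ^ 2) * ν / Real.sqrt M := by
    have hρsq : ρ ^ 2 = c ^ 2 / (ν ^ 2 * v) := by
      rw [hρ, corr, ← hc', ← hv', hvar k0, div_pow, mul_pow,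
        Real.sq_sqrt hνpos.le, Real.sq_sqrt hv.le]
    have hκρ : κ = (1 - ρ ^ 2) * ν ^ 2 := by
      rw [hρsq, hκ']
      field_simp
    have h1ρ : 0 ≤ 1 - ρ ^ 2 := by nlinarith [hκ0, hνpos, hκρ]
    have hmk : ((M : ℝ)⁻¹) ^ 2 * ((M : ℝ) * κ) = κ / (M : ℝ) := by
      field_simp
    rw [hint1, hgvar, hmk, Real.sqrt_div hκ0, hκρ, Real.sqrt_mul h1ρ, Real.sqrt_sq hν]
  -- second term
  have hterm2 : Real.sqrt (∫ ω, f2 ω ^ 2 ∂P) ≤ σ / Real.sqrt N := by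
    have e : ∀ ω, f2 ω ^ 2 = ((M : ℝ)⁻¹) ^ 2 * (∑ k, E k ω) ^ 2 := fun ω => by
      rw [hf2']; ring
    simp_rw [e]
    rw [integral_const_mul, Real.sqrt_mul (sq_nonneg _),
      Real.sqrt_sq (by positivity : (0:ℝ) ≤ (M : ℝ)⁻¹)]
    have hsum := l2Sum Finset.univ E (fun k _ => hE2 k)
    have heach : ∀ k : Fin M, Real.sqrt (∫ ω, E k ω ^ 2 ∂P) ≤ σ / Real.sqrt N := by
      intro k
      calc Real.sqrt (∫ ω, E k ω ^ 2 ∂P) ≤ Real.sqrt (σ ^ 2 / N) :=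
            Real.sqrt_le_sqrt (hnoise k)
        _ = σ / Real.sqrt N := by rw [Real.sqrt_div (sq_nonneg σ), Real.sqrt_sq hσ]
    calc (M : ℝ)⁻¹ * Real.sqrt (∫ ω, (∑ k, E k ω) ^ 2 ∂P)
        ≤ (M : ℝ)⁻¹ * ∑ k, Real.sqrt (∫ ω, E k ω ^ 2 ∂P) := by
          exact mul_le_mul_of_nonneg_left hsum (by positivity)
      _ ≤ (M : ℝ)⁻¹ * ((M : ℝ) * (σ / Real.sqrt N)) := by
          refine mul_le_mul_of_nonneg_left ?_ (by positivity)
          calc ∑ k : Fin M, Real.sqrt (∫ ω, E k ω ^ 2 ∂P)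
              ≤ ∑ _k : Fin M, (σ / Real.sqrt N) := Finset.sum_le_sum fun k _ => heach k
            _ = (M : ℝ) * (σ / Real.sqrt N) := by
                rw [Finset.sum_const, Finset.card_univ, Fintype.card_fin, nsmul_eq_mul]
      _ = σ / Real.sqrt N := by field_simp
  -- conclusion
  calc Real.sqrt (∫ ω, (m - A ω) ^ 2 ∂P)
      = Real.sqrt (∫ ω, (f1 ω + f2 ω) ^ 2 ∂P) := by simp only [hdecomp]
    _ ≤ Real.sqrt (∫ ω, f1 ω ^ 2 ∂P) + Real.sqrt (∫ ω, f2 ω ^ 2 ∂P) :=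
        l2Add f1 f2 hf1L2 hf2L2
    _ ≤ Real.sqrt (1 - ρ ^ 2) * ν / Real.sqrt M + σ / Real.sqrt N := by
        rw [hterm1]
        exact add_le_add_right hterm2 _
end

section
/- Let σ > 0, m ∈ (−1, 1), C > 0, and define f : (−1, 1) → ℝ by f(w) = C (1+w)^{(1+m)/σ² − 1} (1−w)^{(1−m)/σ² − 1}. Then for every w ∈ (−1, 1) the zero-flux identity (m − w) f(w) = (σ²/2) · (d/dw)[ (1 − w²) f(w) ] holds; consequently f is a stationary solution of the Fokker–Planck opinion-formation equation ∂_t f + ∂_w[(m − w) f] = (σ²/2) ∂²_w[(1 − w²) f] on (−1, 1). -/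
open Real

lemma aux_hasDeriv (p q w : ℝ) (hw : w ∈ Set.Ioo (-1 : ℝ) 1) :
    HasDerivAt (fun x : ℝ => (1 + x) ^ p * (1 - x) ^ q)
      (p * (1 + w) ^ (p - 1) * (1 - w) ^ q - q * (1 + w) ^ p * (1 - w) ^ (q - 1)) w := by
  have h1 : (0:ℝ) < 1 + w := by linarith [hw.1]
  have h2 : (0:ℝ) < 1 - w := by linarith [hw.2]
  have d1 : HasDerivAt (fun x : ℝ => (1 + x) ^ p) (p * (1 + w) ^ (p - 1)) w := by
    have := (Real.hasDerivAt_rpow_const (x := 1 + w) (p := p) (Or.inl h1.ne')).comp w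
      ((hasDerivAt_id w).const_add 1)
    simpa [Function.comp_def] using this
  have d2 : HasDerivAt (fun x : ℝ => (1 - x) ^ q) (-(q * (1 - w) ^ (q - 1))) w := by
    have := (Real.hasDerivAt_rpow_const (x := 1 - w) (p := q) (Or.inl h2.ne')).comp w
      ((hasDerivAt_id w).const_sub 1)
    simpa [Function.comp_def] using this
  have := d1.mul d2
  exact this.congr_deriv (by ring)

/-- the Beta-type profile
`f(w) = C (1+w)^{(1+m)/σ² − 1} (1−w)^{(1−m)/σ² − 1}` on `(−1,1)` satisfies the zero-flux
identity `(m − w) f(w) = (σ²/2) d/dw[(1 − w²) f(w)]`; consequently it is a stationary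
solution of the Fokker–Planck opinion-formation equation
`∂_t f + ∂_w[(m − w) f] = (σ²/2) ∂²_w[(1 − w²) f]` on `(−1,1)`. -/
theorem stmt16 (σ m C : ℝ) (hσ : 0 < σ) (hm : m ∈ Set.Ioo (-1 : ℝ) 1) (hC : 0 < C)
    (f : ℝ → ℝ)
    (hf : ∀ w ∈ Set.Ioo (-1 : ℝ) 1,
      f w = C * (1 + w) ^ ((1 + m) / σ ^ 2 - 1) * (1 - w) ^ ((1 - m) / σ ^ 2 - 1)) :
    (∀ w ∈ Set.Ioo (-1 : ℝ) 1,
      (m - w) * f w = σ ^ 2 / 2 * deriv (fun w' => (1 - w' ^ 2) * f w') w) ∧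
    (∀ w ∈ Set.Ioo (-1 : ℝ) 1,
      deriv (fun w' => (m - w') * f w') w
        = σ ^ 2 / 2 * deriv (fun w' => deriv (fun w'' => (1 - w'' ^ 2) * f w'') w') w) := by
  have hσ2 : (0:ℝ) < σ ^ 2 := by positivity
  set p : ℝ := (1 + m) / σ ^ 2 with hp
  set q : ℝ := (1 - m) / σ ^ 2 with hq
  -- the product (1 - w^2) * f w equals G w on Ioo
  set G : ℝ → ℝ := fun x => C * ((1 + x) ^ p * (1 - x) ^ q) with hGdef
  have hGeq : ∀ x ∈ Set.Ioo (-1 : ℝ) 1, (1 - x ^ 2) * f x = G x := by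
    intro x hx
    have h1 : (0:ℝ) < 1 + x := by linarith [hx.1]
    have h2 : (0:ℝ) < 1 - x := by linarith [hx.2]
    rw [hf x hx, hGdef]
    have e1 : (1 + x) ^ p = (1 + x) ^ (p - 1) * (1 + x) := by
      rw [← Real.rpow_add_one h1.ne']; ring_nf
    have e2 : (1 - x) ^ q = (1 - x) ^ (q - 1) * (1 - x) := by
      rw [← Real.rpow_add_one h2.ne']; ring_nf
    simp only [e1, e2]
    ring
  have key : ∀ w ∈ Set.Ioo (-1 : ℝ) 1,
      (m - w) * f w = σ ^ 2 / 2 * deriv (fun w' => (1 - w' ^ 2) * f w') w := by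
    intro w hw
    have h1 : (0:ℝ) < 1 + w := by linarith [hw.1]
    have h2 : (0:ℝ) < 1 - w := by linarith [hw.2]
    have hG : HasDerivAt G
        (C * (p * (1 + w) ^ (p - 1) * (1 - w) ^ q - q * (1 + w) ^ p * (1 - w) ^ (q - 1))) w :=
      (aux_hasDeriv p q w hw).const_mul C
    have hev : (fun w' => (1 - w' ^ 2) * f w') =ᶠ[nhds w] G :=
      Filter.eventuallyEq_of_mem (isOpen_Ioo.mem_nhds hw) hGeq
    rw [hev.deriv_eq, hG.deriv]
    have e1 : (1 + w) ^ p = (1 + w) ^ (p - 1) * (1 + w) := by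
      rw [← Real.rpow_add_one h1.ne']; ring_nf
    have e2 : (1 - w) ^ q = (1 - w) ^ (q - 1) * (1 - w) := by
      rw [← Real.rpow_add_one h2.ne']; ring_nf
    rw [hf w hw, e1, e2]
    have hp' : σ ^ 2 * p = 1 + m := by rw [hp]; field_simp [hσ2.ne']
    have hq' : σ ^ 2 * q = 1 - m := by rw [hq]; field_simp [hσ2.ne']
    generalize (1 + w) ^ (p - 1) = A
    generalize (1 - w) ^ (q - 1) = B
    have hinv : σ ^ 2 * σ⁻¹ ^ 2 = 1 := by
      field_simp
    linear_combination (C * A * B * (1 - w) / 2) * hp' - (C * A * B * (1 + w) / 2) * hq'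
      - (2 * (m - w) * C * A * B) * hinv
  refine ⟨key, ?_⟩
  intro w hw
  have hev : (fun w' => (m - w') * f w')
      =ᶠ[nhds w] (fun w' => σ ^ 2 / 2 * deriv (fun w'' => (1 - w'' ^ 2) * f w'') w') :=
    Filter.eventuallyEq_of_mem (isOpen_Ioo.mem_nhds hw) key
  rw [hev.deriv_eq, deriv_const_mul_field]
end

section
/- Let σ > 0, λ > 0, m > 0, C > 0, set μ = 1 + 2λ/σ², and define f : (0, ∞) → ℝ by f(w) = C w^{−(1+μ)} exp( −(μ − 1) m / w ). Then for every w > 0 the zero-flux identity λ (m − w) f(w) = (σ²/2) · (d/dw)[ w² f(w) ] holds; consequently f is a stationary solution of the Fokker–Planck wealth-distribution equation ∂_t f + λ ∂_w[(m − w) f] = (σ²/2) ∂²_w[ w² f ] on (0, ∞). -/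
open Real

/-- the inverse-Gamma-type profile
`f(w) = C w^{−(1+μ)} exp(−(μ−1)m/w)` on `(0,∞)`, with `μ = 1 + 2λ/σ²`, satisfies the
zero-flux identity `λ(m − w) f(w) = (σ²/2) d/dw[w² f(w)]`; consequently it is a stationary
solution of the Fokker–Planck wealth-distribution equation
`∂_t f + λ ∂_w[(m − w) f] = (σ²/2) ∂²_w[w² f]` on `(0,∞)`. -/
theorem stmt17 (σ lam m C : ℝ) (hσ : 0 < σ) (hlam : 0 < lam) (hm : 0 < m) (hC : 0 < C)
    (μ : ℝ) (hμ : μ = 1 + 2 * lam / σ ^ 2)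
    (f : ℝ → ℝ)
    (hf : ∀ w ∈ Set.Ioi (0 : ℝ), f w = C * w ^ (-(1 + μ)) * Real.exp (-((μ - 1) * m) / w)) :
    (∀ w ∈ Set.Ioi (0 : ℝ),
      lam * (m - w) * f w = σ ^ 2 / 2 * deriv (fun w' => w' ^ 2 * f w') w) ∧
    (∀ w ∈ Set.Ioi (0 : ℝ),
      deriv (fun w' => lam * ((m - w') * f w')) w
        = σ ^ 2 / 2 * deriv (fun w' => deriv (fun w'' => w'' ^ 2 * f w'') w') w) := by
  have hσ2 : (0:ℝ) < σ ^ 2 := by positivity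
  have hlamσ : σ ^ 2 / 2 * (μ - 1) = lam := by
    rw [hμ]; field_simp; ring
  set k : ℝ := (μ - 1) * m with hk
  have hkey : ∀ w ∈ Set.Ioi (0 : ℝ),
      HasDerivAt (fun w' => w' ^ 2 * f w')
        (C * w ^ (-μ) * Real.exp (-k / w) * ((1 - μ) + k / w)) w := by
    intro w hw
    have hw0 : (0:ℝ) < w := hw
    have h1 : HasDerivAt (fun w' : ℝ => w' ^ (1 - μ)) ((1 - μ) * w ^ (1 - μ - 1)) w :=
      Real.hasDerivAt_rpow_const (Or.inl hw0.ne')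
    have h2 : HasDerivAt (fun w' : ℝ => -k / w') (k / w ^ 2) w := by
      have h := (hasDerivAt_inv hw0.ne').const_mul (-k)
      have hv : -k * -(w ^ 2)⁻¹ = k / w ^ 2 := by field_simp
      simpa [div_eq_mul_inv, hv] using h
    have h3 := h2.exp
    have hG := (h1.const_mul C).mul h3
    have heq : (fun w' => w' ^ 2 * f w')
        =ᶠ[nhds w] (fun w' : ℝ => C * w' ^ (1 - μ) * Real.exp (-k / w')) := by
      filter_upwards [isOpen_Ioi.mem_nhds hw] with x hx
      have hx0 : (0:ℝ) < x := hx
      have hp : (x:ℝ) ^ (2:ℕ) * x ^ (-(1 + μ)) = x ^ (1 - μ) := by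
        rw [← Real.rpow_natCast x 2, ← Real.rpow_add hx0]
        congr 1; push_cast; ring
      rw [hf x hx, ← hp]; ring
    have hG' := hG.congr_of_eventuallyEq heq
    refine HasDerivAt.congr_deriv hG' ?_
    have e1 : w ^ (1 - μ - 1) = w ^ (-μ) := by rw [show (1 - μ - 1) = -μ by ring]
    have e2 : w ^ (1 - μ) = w ^ (-μ) * w := by
      rw [← Real.rpow_add_one hw0.ne' (-μ)]; congr 1; ring
    rw [e1, e2]
    field_simp
  have part1 : ∀ w ∈ Set.Ioi (0 : ℝ),
      lam * (m - w) * f w = σ ^ 2 / 2 * deriv (fun w' => w' ^ 2 * f w') w := by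
    intro w hw
    have hw0 : (0:ℝ) < w := hw
    rw [(hkey w hw).deriv, hf w hw]
    have e3 : w ^ (-μ) = w ^ (-(1 + μ)) * w := by
      rw [← Real.rpow_add_one hw0.ne' (-(1+μ))]; congr 1; ring
    rw [e3, ← hlamσ, hk]
    field_simp
    ring
  refine ⟨part1, fun w hw => ?_⟩
  have heq2 : (fun w' => lam * ((m - w') * f w'))
      =ᶠ[nhds w] (fun w' => σ ^ 2 / 2 * deriv (fun w'' => w'' ^ 2 * f w'') w') := by
    filter_upwards [isOpen_Ioi.mem_nhds hw] with x hx
    rw [← mul_assoc]; exact part1 x hx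
  rw [heq2.deriv_eq, deriv_const_mul_field]
end

section
/- Let σ > 0, p > 0, m ∈ (−1, 1), C > 0, and define f : (−1, 1) → ℝ by f(w) = C (1+w)^{−2 + pm/(2σ²)} (1−w)^{−2 − pm/(2σ²)} exp( −p(1 − m w)/(σ²(1 − w²)) ). Then for every w ∈ (−1, 1) the zero-flux identity p (m − w) f(w) = (σ²/2) · (d/dw)[ (1 − w²)² f(w) ] holds; consequently f is a stationary solution of the Fokker–Planck opinion-formation equation ∂_t f + ∂_w[ p (m − w) f ] = (σ²/2) ∂²_w[ (1 − w²)² f ] on (−1, 1). -/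
open Real

/-- the Maxwellian-like profile
`f(w) = C (1+w)^{−2 + pm/(2σ²)} (1−w)^{−2 − pm/(2σ²)} exp(−p(1 − m w)/(σ²(1 − w²)))`
on `(−1,1)` satisfies the zero-flux identity
`p(m − w) f(w) = (σ²/2) d/dw[(1 − w²)² f(w)]`; consequently it is a stationary solution of
the Fokker–Planck opinion-formation equation
`∂_t f + ∂_w[p(m − w) f] = (σ²/2) ∂²_w[(1 − w²)² f]` on `(−1,1)`. -/
theorem stmt18 (σ p m C : ℝ) (hσ : 0 < σ) (hp : 0 < p) (hm : m ∈ Set.Ioo (-1 : ℝ) 1)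
    (hC : 0 < C)
    (f : ℝ → ℝ)
    (hf : ∀ w ∈ Set.Ioo (-1 : ℝ) 1,
      f w = C * (1 + w) ^ (-2 + p * m / (2 * σ ^ 2)) * (1 - w) ^ (-2 - p * m / (2 * σ ^ 2))
        * Real.exp (-(p * (1 - m * w)) / (σ ^ 2 * (1 - w ^ 2)))) :
    (∀ w ∈ Set.Ioo (-1 : ℝ) 1,
      p * (m - w) * f w = σ ^ 2 / 2 * deriv (fun w' => (1 - w' ^ 2) ^ 2 * f w') w) ∧
    (∀ w ∈ Set.Ioo (-1 : ℝ) 1,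
      deriv (fun w' => p * (m - w') * f w') w
        = σ ^ 2 / 2 * deriv (fun w' => deriv (fun w'' => (1 - w'' ^ 2) ^ 2 * f w'') w') w) := by
  have hσ2 : (σ : ℝ) ^ 2 ≠ 0 := pow_ne_zero 2 hσ.ne'
  obtain ⟨q, hq0⟩ : ∃ q : ℝ, σ ^ 2 = q := ⟨_, rfl⟩
  rw [hq0] at hσ2 hf ⊢
  set α : ℝ := -2 + p * m / (2 * q) with hα
  set β : ℝ := -2 - p * m / (2 * q) with hβ
  set E : ℝ → ℝ := fun w' => -(p * (1 - m * w')) / (q * (1 - w' ^ 2)) with hE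
  have key : ∀ w ∈ Set.Ioo (-1 : ℝ) 1,
      p * (m - w) * f w = q / 2 * deriv (fun w' => (1 - w' ^ 2) ^ 2 * f w') w := by
    intro w hw
    obtain ⟨hw1, hw2⟩ := hw
    have h1p : (0 : ℝ) < 1 + w := by linarith
    have h1m : (0 : ℝ) < 1 - w := by linarith
    have h1w : (0 : ℝ) < 1 - w ^ 2 := by nlinarith
    have hden : q * (1 - w ^ 2) ≠ 0 := mul_ne_zero hσ2 h1w.ne'
    have hinner1 : HasDerivAt (fun w' : ℝ => 1 + w') (1 : ℝ) w := by
      simpa using (hasDerivAt_const w (1 : ℝ)).fun_add (hasDerivAt_id w)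
    have hinner2 : HasDerivAt (fun w' : ℝ => 1 - w') (-1 : ℝ) w := by
      simpa using (hasDerivAt_const w (1 : ℝ)).fun_sub (hasDerivAt_id w)
    have hsq : HasDerivAt (fun w' : ℝ => 1 - w' ^ 2) (-(2 * w)) w := by
      simpa using (hasDerivAt_const w (1 : ℝ)).fun_sub (hasDerivAt_pow 2 w)
    have hA : HasDerivAt (fun w' : ℝ => (1 + w') ^ α) (1 * α * (1 + w) ^ (α - 1)) w :=
      hinner1.rpow_const (Or.inl h1p.ne')
    have hB : HasDerivAt (fun w' : ℝ => (1 - w') ^ β) ((-1) * β * (1 - w) ^ (β - 1)) w :=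
      hinner2.rpow_const (Or.inl h1m.ne')
    have hu : HasDerivAt (fun w' : ℝ => -(p * (1 - m * w'))) (-(p * -m)) w := by
      have : HasDerivAt (fun w' : ℝ => 1 - m * w') (-m) w := by
        simpa using (hasDerivAt_const w (1 : ℝ)).fun_sub ((hasDerivAt_id w).const_mul m)
      exact (this.const_mul p).neg
    have hv : HasDerivAt (fun w' : ℝ => q * (1 - w' ^ 2)) (q * -(2 * w)) w :=
      hsq.const_mul q
    have hEd : HasDerivAt E
        ((-(p * -m) * (q * (1 - w ^ 2)) - -(p * (1 - m * w)) * (q * -(2 * w)))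
          / (q * (1 - w ^ 2)) ^ 2) w := hu.div hv hden
    have hExp : HasDerivAt (fun w' => Real.exp (E w')) (Real.exp (E w) *
        ((-(p * -m) * (q * (1 - w ^ 2)) - -(p * (1 - m * w)) * (q * -(2 * w)))
          / (q * (1 - w ^ 2)) ^ 2)) w := by
      simpa [mul_comm] using hEd.exp
    have hQ : HasDerivAt (fun w' : ℝ => (1 - w' ^ 2) ^ 2)
        ((2 : ℕ) * (1 - w ^ 2) ^ 1 * -(2 * w)) w := by
      simpa using hsq.fun_pow 2
    have hProd := (((hA.const_mul C).fun_mul hB).fun_mul hExp)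
    have hTot := hQ.fun_mul hProd
    have hEq : (fun w' => (1 - w' ^ 2) ^ 2 * f w')
        =ᶠ[nhds w] (fun w' => (1 - w' ^ 2) ^ 2 * (C * (1 + w') ^ α * (1 - w') ^ β
            * Real.exp (E w'))) := by
      filter_upwards [isOpen_Ioo.mem_nhds (⟨hw1, hw2⟩ : w ∈ Set.Ioo (-1 : ℝ) 1)] with x hx
      rw [hf x hx]
    rw [hEq.deriv_eq, hTot.deriv, hf w ⟨hw1, hw2⟩]
    rw [Real.rpow_sub_one h1p.ne' α, Real.rpow_sub_one h1m.ne' β]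
    set X : ℝ := (1 + w) ^ α
    set Y : ℝ := (1 - w) ^ β
    set Z : ℝ := Real.exp (E w)
    rw [hα, hβ]
    field_simp
    ring
  constructor
  · intro w hw; exact key w hw
  · intro w hw
    have hEq2 : (fun w' => p * (m - w') * f w')
        =ᶠ[nhds w] (fun w' => q / 2 * deriv (fun w'' => (1 - w'' ^ 2) ^ 2 * f w'') w') := by
      filter_upwards [isOpen_Ioo.mem_nhds hw] with x hx
      exact key x hx
    rw [hEq2.deriv_eq, deriv_const_mul_field]
end
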